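/- arXiv:1210.5363 — 6 statements merged into one kernel-verified Lean document; each statement's English description precedes it below -/
import Mathlib

section
/- Let T be a semi-complete digraph. Then every ordering of V(T) that sorts the vertices in nondecreasing order of outdegree has width at most 100·ctw(T)² + 22·ctw(T) + 1. -/
/-- A digraph (given by its arc relation) is semi-complete if it is simple (no loops;
multiple arcs are impossible in this encoding) and any two distinct vertices are
joined by an arc in at least one direction. -/
def SemiComplete {V : Type*} (E : V → V → Prop) : Prop :=
  (∀ v, ¬ E v v) ∧ ∀ v w : V, v ≠ w → E v w ∨ E w v

/-- The outdegree of a vertex: the number of its outneighbours. -/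
noncomputable def outdeg {V : Type*} (E : V → V → Prop) (v : V) : ℕ :=
  {w | E v w}.ncard

/-- A directed path, encoded as a nonempty list of pairwise distinct vertices in which
consecutive vertices are joined by arcs. -/
def IsDipath {V : Type*} (E : V → V → Prop) (p : List V) : Prop :=
  p ≠ [] ∧ p.Nodup ∧ p.Chain' E

/-- A directed path from `v` to `w`. -/
def PathFrom {V : Type*} (E : V → V → Prop) (v w : V) (p : List V) : Prop :=
  IsDipath E p ∧ p.head? = some v ∧ p.getLast? = some w

/-- The length of a path (its number of arcs). -/
def pathLen {V : Type*} (p : List V) : ℕ := p.length - 1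

/-- The internal vertices of a path: all vertices except the first and the last one. -/
def internals {V : Type*} (p : List V) : List V := (p.drop 1).dropLast

/-- The arcs of a path. -/
def arcsOf {V : Type*} (p : List V) : List (V × V) := p.zip (p.drop 1)

/-- A `(k,d)`-short jungle: a set `X` of at least `k` vertices such that for every ordered
pair of distinct vertices `v, w ∈ X` there are `k` pairwise distinct paths from `v` to `w`,
each of length at most `d`, that are pairwise internally vertex-disjoint. -/
def ShortJungle {V : Type*} (E : V → V → Prop) (k d : ℕ) (X : Set V) : Prop :=
  k ≤ X.ncard ∧ ∀ v ∈ X, ∀ w ∈ X, v ≠ w →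
    ∃ P : Fin k → List V, Function.Injective P ∧
      (∀ i, PathFrom E v w (P i) ∧ pathLen (P i) ≤ d) ∧
      (∀ i j, i ≠ j → ∀ z ∈ internals (P i), z ∉ internals (P j))

/-- A `(k,d)`-short immersion jungle: as a short jungle, but with the `k` paths required
to be pairwise arc-disjoint instead of internally vertex-disjoint. -/
def ShortImmersionJungle {V : Type*} (E : V → V → Prop) (k d : ℕ) (X : Set V) : Prop :=
  k ≤ X.ncard ∧ ∀ v ∈ X, ∀ w ∈ X, v ≠ w →
    ∃ P : Fin k → List V, Function.Injective P ∧
      (∀ i, PathFrom E v w (P i) ∧ pathLen (P i) ≤ d) ∧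
      (∀ i j, i ≠ j → ∀ a ∈ arcsOf (P i), a ∉ arcsOf (P j))

/-- `H` (arc relation `Eh`) is topologically contained in `G` (arc relation `Eg`):
there is an injective map `η` on vertices and, for every arc `(u,v)` of `H`, a directed
path in `G` from `η u` to `η v`, these paths being pairwise internally vertex-disjoint
with no internal vertex in the image of `η`. -/
def TopContain {W V : Type*} (Eh : W → W → Prop) (Eg : V → V → Prop) : Prop :=
  ∃ (η : W → V) (P : W → W → List V), Function.Injective η ∧
    (∀ u v : W, Eh u v → PathFrom Eg (η u) (η v) (P u v)) ∧
    (∀ u v : W, Eh u v → ∀ z ∈ internals (P u v), z ∉ Set.range η) ∧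
    (∀ u v u' v' : W, Eh u v → Eh u' v' → (u, v) ≠ (u', v') →
      ∀ z ∈ internals (P u v), z ∉ internals (P u' v'))

/-- `H` (arc relation `Eh`) is immersed in `G` (arc relation `Eg`): there is an injective
map `η` on vertices and, for every arc `(u,v)` of `H`, a directed path in `G` from `η u`
to `η v`, these paths being pairwise arc-disjoint. -/
def Immerses {W V : Type*} (Eh : W → W → Prop) (Eg : V → V → Prop) : Prop :=
  ∃ (η : W → V) (P : W → W → List V), Function.Injective η ∧
    (∀ u v : W, Eh u v → PathFrom Eg (η u) (η v) (P u v)) ∧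
    (∀ u v u' v' : W, Eh u v → Eh u' v' → (u, v) ≠ (u', v') →
      ∀ a ∈ arcsOf (P u v), a ∉ arcsOf (P u' v'))

/-- A path decomposition of the digraph with arc relation `E`, with bags `Bs 0, …, Bs (r-1)`. -/
def IsPathDecomp {V : Type*} {r : ℕ} (E : V → V → Prop) (Bs : Fin r → Set V) : Prop :=
  (⋃ i, Bs i) = Set.univ ∧
  (∀ i j l : Fin r, i < j → j < l → Bs i ∩ Bs l ⊆ Bs j) ∧
  (∀ u v : V, E u v →
    (∃ i, u ∈ Bs i ∧ v ∈ Bs i) ∨ ∃ i j : Fin r, j < i ∧ u ∈ Bs i ∧ v ∈ Bs j)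

/-- The pathwidth of a digraph: the least `p` admitting a path decomposition all of whose
bags have size at most `p + 1`. -/
noncomputable def pathwidth {V : Type*} (E : V → V → Prop) : ℕ :=
  sInf {p | ∃ (r : ℕ) (Bs : Fin r → Set V), IsPathDecomp E Bs ∧ ∀ i, (Bs i).ncard - 1 ≤ p}

/-- A separation of a digraph: a pair `(A,B)` covering all vertices with no arc from
`A \ B` to `B \ A`. -/
def IsSeparation {V : Type*} (E : V → V → Prop) (A B : Set V) : Prop :=
  A ∪ B = Set.univ ∧ ∀ v ∈ A \ B, ∀ w ∈ B \ A, ¬ E v w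

/-- A separation chain `((A 0, B 0), …, (A r, B r))`. -/
def IsSepChain {V : Type*} {r : ℕ} (E : V → V → Prop) (A B : Fin (r + 1) → Set V) : Prop :=
  A 0 = ∅ ∧ B 0 = Set.univ ∧ A (Fin.last r) = Set.univ ∧ B (Fin.last r) = ∅ ∧
  (∀ i, IsSeparation E (A i) (B i)) ∧
  (∀ i j : Fin (r + 1), i ≤ j → A i ⊆ A j ∧ B j ⊆ B i)

/-- A `(k,ℓ)`-degree tangle: at least `k` vertices whose outdegrees pairwise differ
by at most `ℓ`. -/
def DegreeTangle {V : Type*} (E : V → V → Prop) (k ℓ : ℕ) (X : Set V) : Prop :=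
  k ≤ X.ncard ∧ ∀ v ∈ X, ∀ w ∈ X, outdeg E v ≤ outdeg E w + ℓ

/-- A `(k,ℓ)`-matching tangle: disjoint sets `X`, `Y` of size `k` with a matching from `X`
to `Y`, where every vertex of `Y` has outdegree more than `ℓ` larger than every vertex
of `X`. -/
def MatchingTangle {V : Type*} (E : V → V → Prop) (k ℓ : ℕ) (X Y : Set V) : Prop :=
  Disjoint X Y ∧ X.ncard = k ∧ Y.ncard = k ∧
  (∃ f : V → V, Set.BijOn f X Y ∧ ∀ v ∈ X, E v (f v)) ∧
  (∀ v ∈ X, ∀ w ∈ Y, outdeg E v + ℓ < outdeg E w)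

/-- A `k`-backward tangle: a partition `(X,Y)` of the vertex set with at least `k` arcs
from `X` to `Y`, and every outdegree in `Y` at least every outdegree in `X`. -/
def BackwardTangle {V : Type*} (E : V → V → Prop) (k : ℕ) (X Y : Set V) : Prop :=
  X ∪ Y = Set.univ ∧ Disjoint X Y ∧
  k ≤ {p : V × V | p.1 ∈ X ∧ p.2 ∈ Y ∧ E p.1 p.2}.ncard ∧
  (∀ v ∈ X, ∀ w ∈ Y, outdeg E v ≤ outdeg E w)

/-- The width of an ordering of the vertices (given as a bijection from `Fin n`):
the maximum, over prefixes, of the number of arcs leaving the prefix forward. -/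
noncomputable def orderWidth {V : Type*} [Fintype V] (E : V → V → Prop)
    (e : Fin (Fintype.card V) ≃ V) : ℕ :=
  ⨆ α : Fin (Fintype.card V + 1),
    {p : V × V | ((e.symm p.1 : ℕ) < (α : ℕ)) ∧ ¬ ((e.symm p.2 : ℕ) < (α : ℕ)) ∧
      E p.1 p.2}.ncard

/-- The cutwidth of a digraph: the minimum width over all orderings of the vertices. -/
noncomputable def cutwidth {V : Type*} [Fintype V] (E : V → V → Prop) : ℕ :=
  ⨅ e : Fin (Fintype.card V) ≃ V, orderWidth E e

/-- `(X,Y)` is a bipartition of the simple graph `G`. -/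
def IsBipartition {V : Type*} (G : SimpleGraph V) (X Y : Set V) : Prop :=
  X ∪ Y = Set.univ ∧ Disjoint X Y ∧
  ∀ u v : V, G.Adj u v → (u ∈ X ∧ v ∈ Y) ∨ (u ∈ Y ∧ v ∈ X)

/-- A matching of `G`: a set of edges of `G` that are pairwise vertex-disjoint. -/
def IsMatching {V : Type*} (G : SimpleGraph V) (M : Set (Sym2 V)) : Prop :=
  M ⊆ G.edgeSet ∧ ∀ e ∈ M, ∀ f ∈ M, e ≠ f → ∀ v : V, v ∈ e → v ∉ f

/-- A maximum matching of `G`. -/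
def IsMaxMatching {V : Type*} [Fintype V] (G : SimpleGraph V) (M : Set (Sym2 V)) : Prop :=
  IsMatching G M ∧ ∀ N : Set (Sym2 V), IsMatching G N → N.ncard ≤ M.ncard

/-- A vertex is covered by a matching if it is an endpoint of one of its edges. -/
def CoveredBy {V : Type*} (M : Set (Sym2 V)) (v : V) : Prop := ∃ e ∈ M, v ∈ e

/-- A vertex is covered by every maximum matching of `G`. -/
def CoveredByAllMax {V : Type*} [Fintype V] (G : SimpleGraph V) (v : V) : Prop :=
  ∀ M : Set (Sym2 V), IsMaxMatching G M → CoveredBy M v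

/-- Deletion of the vertex `w` from a simple graph (keeping the vertex type). -/
def deleteVert {V : Type*} (G : SimpleGraph V) (w : V) : SimpleGraph V where
  Adj x y := G.Adj x y ∧ x ≠ w ∧ y ≠ w
  symm := ⟨fun _ _ h => ⟨h.1.symm, h.2.2, h.2.1⟩⟩
  loopless := ⟨fun x h => G.loopless.irrefl x h.1⟩

/-- An `M`-alternating path from `u` to `v`: a (possibly trivial) path starting at `u` and
ending at `v` whose edges alternate between non-matching and matching edges, beginning
with a non-matching edge. -/
def AltPathFrom {V : Type*} (G : SimpleGraph V) (M : Set (Sym2 V)) (u v : V) : Prop :=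
  ∃ p : List V, p ≠ [] ∧ p.Nodup ∧ p.Chain' G.Adj ∧
    p.head? = some u ∧ p.getLast? = some v ∧
    ∀ i : ℕ, (h : i + 1 < p.length) →
      (s(p.get ⟨i, Nat.lt_of_succ_lt h⟩, p.get ⟨i + 1, h⟩) ∈ M ↔ i % 2 = 1)

section Aux

variable {V : Type*} [Fintype V]

/-- The set of arcs crossing the cut after the first `β` vertices of ordering `σ`. -/
def crossSet (E : V → V → Prop) (σ : Fin (Fintype.card V) ≃ V) (β : ℕ) : Set (V × V) :=
  {p : V × V | ((σ.symm p.1 : ℕ) < β) ∧ ¬ ((σ.symm p.2 : ℕ) < β) ∧ E p.1 p.2}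

lemma crossSet_ncard_le (E : V → V → Prop) (σ : Fin (Fintype.card V) ≃ V) (β : ℕ) :
    (crossSet E σ β).ncard ≤ orderWidth E σ := by
  by_cases hβ : β ≤ Fintype.card V
  · have : crossSet E σ β =
        {p : V × V | ((σ.symm p.1 : ℕ) < ((⟨β, by omega⟩ : Fin (Fintype.card V + 1)) : ℕ)) ∧
          ¬ ((σ.symm p.2 : ℕ) < ((⟨β, by omega⟩ : Fin (Fintype.card V + 1)) : ℕ)) ∧ E p.1 p.2} := rfl
    rw [this, orderWidth]
    exact le_ciSup (f := fun α : Fin (Fintype.card V + 1) =>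
      {p : V × V | ((σ.symm p.1 : ℕ) < (α : ℕ)) ∧ ¬ ((σ.symm p.2 : ℕ) < (α : ℕ)) ∧
        E p.1 p.2}.ncard) (Set.Finite.bddAbove (Set.finite_range _)) ⟨β, by omega⟩
  · have : crossSet E σ β = ∅ := by
      ext p
      simp only [crossSet, Set.mem_setOf_eq, Set.mem_empty_iff_false, iff_false]
      intro ⟨_, h2, _⟩
      exact h2 (lt_of_lt_of_le (σ.symm p.2).isLt (by omega))
    rw [this]; simp

/-- The number of vertices with position `< k` is `k` (for `k ≤ n`). -/
lemma ncard_pos_lt (σ : Fin (Fintype.card V) ≃ V) (k : ℕ) (hk : k ≤ Fintype.card V) :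
    {w : V | (σ.symm w : ℕ) < k}.ncard = k := by
  have : {w : V | (σ.symm w : ℕ) < k} = Set.range (fun j : Fin k => σ (Fin.castLE hk j)) := by
    ext w
    simp only [Set.mem_setOf_eq, Set.mem_range]
    constructor
    · intro h
      exact ⟨⟨(σ.symm w : ℕ), h⟩, by simp [Fin.castLE, Fin.ext_iff]⟩
    · rintro ⟨j, rfl⟩
      rw [Equiv.symm_apply_apply]
      exact j.isLt
  have hinj : Function.Injective (fun j : Fin k => σ (Fin.castLE hk j)) :=
    fun a b hab => Fin.castLE_injective hk (σ.injective hab)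
  rw [this, ← Set.image_univ, Set.ncard_image_of_injective _ hinj, Set.ncard_univ,
    Nat.card_eq_fintype_card, Fintype.card_fin]

lemma ncard_biUnion_le {α ι : Type*} [DecidableEq ι] [Finite α] (s : Finset ι) (t : ι → Set α) :
    (⋃ i ∈ s, t i).ncard ≤ ∑ i ∈ s, (t i).ncard := by
  classical
  induction s using Finset.induction with
  | empty => simp
  | insert _ _ hx ih =>
    rename_i a s'
    rw [Finset.set_biUnion_insert, Finset.sum_insert hx]
    exact le_trans (Set.ncard_union_le _ _) (by omega)

end Aux

section Pos
variable {V : Type*} [Fintype V]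

lemma pos_le_outdeg_add (E : V → V → Prop) (hT : SemiComplete E)
    (σ : Fin (Fintype.card V) ≃ V) (c : ℕ) (hcut : ∀ β : ℕ, (crossSet E σ β).ncard ≤ c)
    (v : V) : (σ.symm v : ℕ) ≤ outdeg E v + c := by
  set k := (σ.symm v : ℕ) with hkdef
  have hP : {w : V | (σ.symm w : ℕ) < k}.ncard = k :=
    ncard_pos_lt σ k (le_of_lt (σ.symm v).isLt)
  have hsub : {w : V | (σ.symm w : ℕ) < k} ⊆
      {w | E v w} ∪ {w | (σ.symm w : ℕ) < k ∧ E w v} := by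
    intro w hw
    by_cases hE : E w v
    · exact Or.inr ⟨hw, hE⟩
    · left
      have hne : w ≠ v := by
        intro h; subst h; exact absurd hw (by simp [hkdef])
      rcases hT.2 w v hne with h | h
      · exact absurd h hE
      · exact h
  have hPin : {w : V | (σ.symm w : ℕ) < k ∧ E w v}.ncard ≤ c := by
    have hinj : Function.Injective (fun w : V => (w, v)) := fun a b h => congrArg Prod.fst h
    have himg : (fun w : V => (w, v)) '' {w | (σ.symm w : ℕ) < k ∧ E w v} ⊆
        crossSet E σ k := by
      rintro q ⟨w, ⟨h1, h2⟩, rfl⟩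
      refine ⟨h1, ?_, h2⟩
      show ¬ (σ.symm v : ℕ) < k
      omega
    calc {w : V | (σ.symm w : ℕ) < k ∧ E w v}.ncard
        = ((fun w : V => (w, v)) '' {w | (σ.symm w : ℕ) < k ∧ E w v}).ncard :=
          (Set.ncard_image_of_injective _ hinj).symm
      _ ≤ (crossSet E σ k).ncard := Set.ncard_le_ncard himg (Set.toFinite _)
      _ ≤ c := hcut k
  calc k = {w : V | (σ.symm w : ℕ) < k}.ncard := hP.symm
    _ ≤ ({w | E v w} ∪ {w | (σ.symm w : ℕ) < k ∧ E w v}).ncard :=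
        Set.ncard_le_ncard hsub (Set.toFinite _)
    _ ≤ {w | E v w}.ncard + {w | (σ.symm w : ℕ) < k ∧ E w v}.ncard := Set.ncard_union_le _ _
    _ ≤ outdeg E v + c := add_le_add (le_of_eq rfl) hPin

lemma outdeg_le_pos_add (E : V → V → Prop) (hT : SemiComplete E)
    (σ : Fin (Fintype.card V) ≃ V) (c : ℕ) (hcut : ∀ β : ℕ, (crossSet E σ β).ncard ≤ c)
    (v : V) : outdeg E v ≤ (σ.symm v : ℕ) + c := by
  set k := (σ.symm v : ℕ) with hkdef
  have hsub : {w : V | E v w} ⊆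
      {w : V | (σ.symm w : ℕ) < k} ∪ {w | E v w ∧ ¬ (σ.symm w : ℕ) < k + 1} := by
    intro w hw
    have hne : w ≠ v := by
      intro h; subst h; exact hT.1 w hw
    have hposne : (σ.symm w : ℕ) ≠ k := by
      intro h
      exact hne (σ.symm.injective (Fin.ext h))
    by_cases h : (σ.symm w : ℕ) < k
    · exact Or.inl h
    · exact Or.inr ⟨hw, by omega⟩
  have hafter : {w : V | E v w ∧ ¬ (σ.symm w : ℕ) < k + 1}.ncard ≤ c := by
    have hinj : Function.Injective (fun w : V => (v, w)) := fun a b h => congrArg Prod.snd h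
    have himg : (fun w : V => (v, w)) '' {w | E v w ∧ ¬ (σ.symm w : ℕ) < k + 1} ⊆
        crossSet E σ (k + 1) := by
      rintro q ⟨w, ⟨h1, h2⟩, rfl⟩
      refine ⟨?_, h2, h1⟩
      show (σ.symm v : ℕ) < k + 1
      omega
    calc {w : V | E v w ∧ ¬ (σ.symm w : ℕ) < k + 1}.ncard
        = ((fun w : V => (v, w)) '' {w | E v w ∧ ¬ (σ.symm w : ℕ) < k + 1}).ncard :=
          (Set.ncard_image_of_injective _ hinj).symm
      _ ≤ (crossSet E σ (k + 1)).ncard := Set.ncard_le_ncard himg (Set.toFinite _)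
      _ ≤ c := hcut (k + 1)
  calc outdeg E v = {w : V | E v w}.ncard := rfl
    _ ≤ ({w : V | (σ.symm w : ℕ) < k} ∪ {w | E v w ∧ ¬ (σ.symm w : ℕ) < k + 1}).ncard :=
        Set.ncard_le_ncard hsub (Set.toFinite _)
    _ ≤ {w : V | (σ.symm w : ℕ) < k}.ncard +
        {w | E v w ∧ ¬ (σ.symm w : ℕ) < k + 1}.ncard := Set.ncard_union_le _ _
    _ ≤ k + c := by
        rw [ncard_pos_lt σ k (le_of_lt (σ.symm v).isLt)]
        omega

end Pos

/-- In a semi-complete digraph, any ordering of the vertices by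
nondecreasing outdegrees has width at most `100·ctw(T)² + 22·ctw(T) + 1`. -/
theorem stmt_12 {V : Type*} [Fintype V] (E : V → V → Prop) (hT : SemiComplete E)
    (e : Fin (Fintype.card V) ≃ V)
    (hmono : ∀ i j : Fin (Fintype.card V), i ≤ j → outdeg E (e i) ≤ outdeg E (e j)) :
    orderWidth E e ≤ 100 * (cutwidth E) ^ 2 + 22 * cutwidth E + 1 := by
  classical
  set c := cutwidth E with hcdef
  -- obtain an optimal ordering σ
  have hmem : cutwidth E ∈ Set.range (fun σ : Fin (Fintype.card V) ≃ V => orderWidth E σ) := by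
    rw [cutwidth, iInf]
    exact Nat.sInf_mem ⟨_, Set.mem_range_self e⟩
  obtain ⟨σ, hσ⟩ := hmem
  have hcut : ∀ β : ℕ, (crossSet E σ β).ncard ≤ c := fun β =>
    (crossSet_ncard_le E σ β).trans (le_of_eq hσ)
  -- position vs outdegree, both directions
  have posA : ∀ v : V, (σ.symm v : ℕ) ≤ outdeg E v + c :=
    pos_le_outdeg_add E hT σ c hcut
  have posB : ∀ v : V, outdeg E v ≤ (σ.symm v : ℕ) + c :=
    outdeg_le_pos_add E hT σ c hcut
  rw [orderWidth]
  refine ciSup_le fun α => ?_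
  show (crossSet E e (α : ℕ)).ncard ≤ 100 * c ^ 2 + 22 * c + 1
  by_cases hk : (α : ℕ) < Fintype.card V
  · set k := (α : ℕ)
    set d := outdeg E (e ⟨k, hk⟩) with hd
    -- outdegree bounds on endpoints of crossing arcs
    have hA : ∀ p ∈ crossSet E e k, outdeg E p.1 ≤ d := by
      intro p hp
      have h1 : (e.symm p.1 : ℕ) < k := hp.1
      have := hmono (e.symm p.1) ⟨k, hk⟩ (by exact le_of_lt h1)
      rwa [Equiv.apply_symm_apply] at this
    have hB : ∀ p ∈ crossSet E e k, d ≤ outdeg E p.2 := by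
      intro p hp
      have h2 : ¬ (e.symm p.2 : ℕ) < k := hp.2.1
      have := hmono ⟨k, hk⟩ (e.symm p.2) (by exact le_of_not_gt h2)
      rwa [Equiv.apply_symm_apply] at this
    -- split into backward (window) and forward (crossing σ-cuts near d)
    set Sb : Set (V × V) := {p : V × V |
      (σ.symm p.1 : ℕ) ∈ Set.Icc (d - c) (d + c) ∧
      (σ.symm p.2 : ℕ) ∈ Set.Icc (d - c) (d + c)} with hSb
    set Sf : Set (V × V) := ⋃ β ∈ Finset.Icc (d - c) (d + c + 1), crossSet E σ β with hSf
    have hsplit : crossSet E e k ⊆ Sb ∪ Sf := by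
      intro p hp
      have h1 : (σ.symm p.1 : ℕ) ≤ d + c := le_trans (posA p.1) (by
        have := hA p hp; omega)
      have h2 : d ≤ (σ.symm p.2 : ℕ) + c := le_trans (hB p hp) (posB p.2)
      by_cases hfw : (σ.symm p.1 : ℕ) < (σ.symm p.2 : ℕ)
      · right
        refine Set.mem_iUnion₂.mpr ⟨max (d - c) ((σ.symm p.1 : ℕ) + 1), ?_, ?_, ?_, hp.2.2⟩
        · simp only [Finset.mem_Icc]
          omega
        · omega
        · omega
      · left
        refine ⟨?_, ?_⟩ <;> simp only [Set.mem_Icc] <;> omega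
    -- cardinality of the backward part
    have hSbcard : Sb.ncard ≤ (2 * c + 1) ^ 2 := by
      set g : V × V → ℕ × ℕ := fun p => ((σ.symm p.1 : ℕ), (σ.symm p.2 : ℕ)) with hg
      have hginj : Function.Injective g := by
        intro p q hpq
        have h1 : (σ.symm p.1 : ℕ) = (σ.symm q.1 : ℕ) := congrArg Prod.fst hpq
        have h2 : (σ.symm p.2 : ℕ) = (σ.symm q.2 : ℕ) := congrArg Prod.snd hpq
        have e1 : p.1 = q.1 := σ.symm.injective (Fin.ext h1)
        have e2 : p.2 = q.2 := σ.symm.injective (Fin.ext h2)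
        exact Prod.ext e1 e2
      have himg : g '' Sb ⊆ (↑(Finset.Icc (d - c) (d + c) ×ˢ Finset.Icc (d - c) (d + c)) :
          Set (ℕ × ℕ)) := by
        rintro q ⟨p, hp, rfl⟩
        simp only [Finset.coe_product, Set.mem_prod, Finset.mem_coe, Finset.mem_Icc]
        simp only [hSb, Set.mem_setOf_eq, Set.mem_Icc] at hp
        exact ⟨hp.1, hp.2⟩
      calc Sb.ncard = (g '' Sb).ncard := (Set.ncard_image_of_injective _ hginj).symm
        _ ≤ (↑(Finset.Icc (d - c) (d + c) ×ˢ Finset.Icc (d - c) (d + c)) :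
            Set (ℕ × ℕ)).ncard := Set.ncard_le_ncard himg (Finset.finite_toSet _)
        _ = (Finset.Icc (d - c) (d + c) ×ˢ Finset.Icc (d - c) (d + c)).card :=
            Set.ncard_coe_finset _
        _ = (Finset.Icc (d - c) (d + c)).card * (Finset.Icc (d - c) (d + c)).card :=
            Finset.card_product _ _
        _ ≤ (2 * c + 1) ^ 2 := by
            rw [Nat.card_Icc, pow_two]
            have : d + c + 1 - (d - c) ≤ 2 * c + 1 := by omega
            exact Nat.mul_le_mul this this
    -- cardinality of the forward part
    have hSfcard : Sf.ncard ≤ (2 * c + 2) * c := by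
      calc Sf.ncard ≤ ∑ β ∈ Finset.Icc (d - c) (d + c + 1), (crossSet E σ β).ncard :=
            ncard_biUnion_le _ _
        _ ≤ ∑ _β ∈ Finset.Icc (d - c) (d + c + 1), c :=
            Finset.sum_le_sum fun β _ => hcut β
        _ = (Finset.Icc (d - c) (d + c + 1)).card * c := by rw [Finset.sum_const, smul_eq_mul]
        _ ≤ (2 * c + 2) * c := by
            rw [Nat.card_Icc]
            exact Nat.mul_le_mul_right _ (by omega)
    calc (crossSet E e k).ncard ≤ (Sb ∪ Sf).ncard :=
          Set.ncard_le_ncard hsplit (Set.toFinite _)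
      _ ≤ Sb.ncard + Sf.ncard := Set.ncard_union_le _ _
      _ ≤ (2 * c + 1) ^ 2 + (2 * c + 2) * c := by omega
      _ ≤ 100 * c ^ 2 + 22 * c + 1 := by nlinarith [sq_nonneg c]
  · have : crossSet E e (α : ℕ) = ∅ := by
      ext p
      simp only [crossSet, Set.mem_setOf_eq, Set.mem_empty_iff_false, iff_false]
      intro ⟨_, h2, _⟩
      exact h2 (lt_of_lt_of_le (e.symm p.2).isLt (by omega))
    rw [this]
    simp
end

section
/- Let G be a finite bipartite graph with bipartition (X, Y), let w ∈ Y, and let G' = G − w be the graph obtained from G by deleting w. Then 𝔐(G) ∩ X ⊇ 𝔐(G') ∩ X and 𝔐(G) ∩ (Y ∖ {w}) ⊆ 𝔐(G') ∩ Y; that is, every vertex of X covered by every maximum matching of G' is covered by every maximum matching of G, and every vertex of Y ∖ {w} covered by every maximum matching of G is covered by every maximum matching of G'. -/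
namespace Stmt15
variable {V : Type*}

/-- the unique edge at a vertex -/
lemma edge_at_unique {G : SimpleGraph V} {M : Set (Sym2 V)} (hM : IsMatching G M)
    {z : V} {e f : Sym2 V} (he : e ∈ M) (hf : f ∈ M) (hze : z ∈ e) (hzf : z ∈ f) : e = f := by
  by_contra h
  exact hM.2 e he f hf h z hze hzf

lemma no_loop {G : SimpleGraph V} {M : Set (Sym2 V)} (hM : IsMatching G M) (z : V) :
    s(z, z) ∉ M := fun h => G.loopless.irrefl z (G.mem_edgeSet.mp (hM.1 h))

lemma partner_eq {G : SimpleGraph V} {M : Set (Sym2 V)} (hM : IsMatching G M)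
    {z a b : V} (ha : s(z,a) ∈ M) (hb : s(z,b) ∈ M) : a = b :=
  Sym2.congr_right.mp
    (edge_at_unique hM ha hb (Sym2.mem_mk_left z a) (Sym2.mem_mk_left z b))

lemma mem_edge {z : V} {e : Sym2 V} (h : z ∈ e) : ∃ y, e = s(z, y) :=
  ⟨Sym2.Mem.other h, (Sym2.other_spec h).symm⟩

open scoped Classical in
noncomputable def stepM (A : Set (Sym2 V)) (z : V) : Option V :=
  if h : ∃ u, s(z,u) ∈ A then some h.choose else none

lemma stepM_spec {A : Set (Sym2 V)} {z u : V} (h : stepM A z = some u) : s(z,u) ∈ A := by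
  unfold stepM at h
  split at h
  · next h' => cases h; exact h'.choose_spec
  · cases h

lemma stepM_none {A : Set (Sym2 V)} {z : V} (h : stepM A z = none) : ¬ CoveredBy A z := by
  rintro ⟨e, he, hze⟩
  obtain ⟨y, rfl⟩ := mem_edge hze
  unfold stepM at h
  split at h
  · cases h
  · next h' => exact h' ⟨y, he⟩

lemma stepM_eq_some {G : SimpleGraph V} {A : Set (Sym2 V)} (hA : IsMatching G A)
    {z u : V} (h : s(z,u) ∈ A) : stepM A z = some u := by
  unfold stepM
  split
  · next h' => exact congrArg some (partner_eq hA h'.choose_spec h)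
  · next h' => exact absurd ⟨u, h⟩ h'

/-- the alternating walk: step `n` uses `A` if `n` is even, else `B`. -/
noncomputable def walkV (A B : Set (Sym2 V)) (v : V) : ℕ → Option V
  | 0 => some v
  | (n+1) => (walkV A B v n).bind (stepM (if Even n then A else B))

variable {G : SimpleGraph V} {A B : Set (Sym2 V)} {v : V}

lemma walk_back {n : ℕ} {y : V} (h : walkV A B v (n+1) = some y) :
    ∃ z, walkV A B v n = some z ∧ s(z, y) ∈ (if Even n then A else B) := by
  rw [walkV] at h
  rcases hw : walkV A B v n with _ | z
  · rw [hw] at h; cases h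
  · rw [hw] at h; exact ⟨z, rfl, stepM_spec h⟩

lemma walk_forward (hA : IsMatching G A) (hB : IsMatching G B) {n : ℕ} {z y : V}
    (hw : walkV A B v n = some z) (h : s(z, y) ∈ (if Even n then A else B)) :
    walkV A B v (n+1) = some y := by
  rw [walkV, hw, Option.bind_some]
  by_cases hn : Even n
  · rw [if_pos hn] at h ⊢; exact stepM_eq_some hA h
  · rw [if_neg hn] at h ⊢; exact stepM_eq_some hB h

lemma walk_inj (hA : IsMatching G A) (hB : IsMatching G B) (hv : ¬ CoveredBy B v) :
    ∀ j i z, i < j → walkV A B v i = some z → walkV A B v j = some z → False := by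
  intro j
  induction j using Nat.strong_induction_on with
  | _ j IH =>
    intro i z hij hi hj
    obtain ⟨j', rfl⟩ : ∃ j', j = j' + 1 := ⟨j - 1, by omega⟩
    obtain ⟨b, hb, hbz⟩ := walk_back hj
    rcases i with _ | i'
    · -- z = v
      obtain rfl : z = v := by cases hi; rfl
      by_cases hej' : Even j'
      · rw [if_pos hej'] at hbz
        have h1 : walkV A B z 1 = some b := by
          apply walk_forward hA hB (n := 0) rfl
          rw [if_pos Even.zero, Sym2.eq_swap]
          exact hbz
        rcases Nat.lt_or_ge 1 j' with h | h
        · exact IH j' (by omega) 1 b h h1 hb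
        · interval_cases j'
          · obtain rfl : b = z := by cases hb; rfl
            exact no_loop hA _ hbz
          · simp at hej'
      · rw [if_neg hej'] at hbz
        exact hv ⟨_, hbz, Sym2.mem_mk_right b z⟩
    · -- i = i' + 1
      obtain ⟨a, ha, haz⟩ := walk_back hi
      by_cases hpar : (Even i' ↔ Even j')
      · -- same matching used to enter z: predecessors equal
        rw [Sym2.eq_swap] at haz hbz
        have hab : a = b := by
          by_cases h : Even i'
          · rw [if_pos h] at haz; rw [if_pos (hpar.mp h)] at hbz
            exact partner_eq hA haz hbz
          · rw [if_neg h] at haz; rw [if_neg (fun hh => h (hpar.mpr hh))] at hbz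
            exact partner_eq hB haz hbz
        subst hab
        exact IH j' (by omega) i' a (by omega) ha hb
      · -- different parity
        have hpar2 : Even (i'+1) ↔ Even j' := by
          rw [Nat.even_add_one]; tauto
        have hfwd : walkV A B v (i'+1+1) = some b := by
          apply walk_forward hA hB hi
          rw [Sym2.eq_swap] at hbz
          by_cases h : Even j'
          · rw [if_pos h] at hbz; rw [if_pos (hpar2.mpr h)]; exact hbz
          · rw [if_neg h] at hbz; rw [if_neg (fun hh => h (hpar2.mp hh))]; exact hbz
        rcases Nat.lt_trichotomy (i'+2) j' with h | h | h
        · exact IH j' (by omega) (i'+2) b h hfwd hb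
        · -- i' + 2 = j' : parity contradiction
          subst h
          exact hpar (by simp [Nat.even_add])
        · -- i'+2 = j'+1
          have he : i' + 1 + 1 = j' + 1 := by omega
          rw [he, hj] at hfwd
          obtain rfl : b = z := by cases hfwd; rfl
          split at hbz
          · exact no_loop hA _ hbz
          · exact no_loop hB _ hbz

lemma walk_none_mono {m n : ℕ} (h : m ≤ n) (hm : walkV A B v m = none) :
    walkV A B v n = none := by
  induction n with
  | zero =>
    obtain rfl : m = 0 := by omega
    exact hm
  | succ n IHn =>
    rcases Nat.lt_or_ge m (n+1) with h' | h'
    · rw [walkV, IHn (by omega)]; rfl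
    · obtain rfl : m = n + 1 := by omega
      exact hm

lemma walk_stops [Fintype V] (hA : IsMatching G A) (hB : IsMatching G B)
    (hv : ¬ CoveredBy B v) : ∃ n, walkV A B v n = none := by
  by_contra h
  push_neg at h
  have hsome : ∀ n : ℕ, ∃ z, walkV A B v n = some z := by
    intro n
    rcases hw : walkV A B v n with _ | z
    · exact absurd hw (h n)
    · exact ⟨z, rfl⟩
  classical
  let f : Fin (Fintype.card V + 1) → V := fun k => (hsome (k : ℕ)).choose
  have hfinj : Function.Injective f := by
    intro k l hkl
    by_contra hne
    have h1 := (hsome (k : ℕ)).choose_spec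
    have h2 := (hsome (l : ℕ)).choose_spec
    rw [show (hsome (k:ℕ)).choose = f k from rfl, hkl] at h1
    rcases Fin.lt_or_lt_of_ne hne with hlt | hlt
    · exact walk_inj hA hB hv (l : ℕ) (k : ℕ) _ hlt h1 h2
    · exact walk_inj hA hB hv (k : ℕ) (l : ℕ) _ hlt h2 h1
  have := Fintype.card_le_of_injective f hfinj
  simp at this

lemma core [Fintype V] (hA : IsMatching G A) (hB : IsMatching G B) (hv : ¬ CoveredBy B v) :
    ∃ (L : ℕ) (x : ℕ → V),
      x 0 = v ∧
      (∀ i j, i ≤ L → j ≤ L → i < j → x i ≠ x j) ∧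
      (∀ n, n < L → s(x n, x (n+1)) ∈ (if Even n then A else B)) ∧
      ¬ CoveredBy (if Even L then A else B) (x L) := by
  classical
  have hstop := walk_stops hA hB hv
  set n0 := Nat.find hstop with hn0
  have hnone : walkV A B v n0 = none := Nat.find_spec hstop
  have hmin : ∀ m, m < n0 → walkV A B v m ≠ none := fun m hm => Nat.find_min hstop hm
  have hn0pos : 0 < n0 := by
    rcases Nat.eq_zero_or_pos n0 with h | h
    · exfalso; rw [h] at hnone; simp [walkV] at hnone
    · exact h
  set L := n0 - 1 with hLdef
  set x : ℕ → V := fun m => (walkV A B v m).getD v with hxdef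
  have hx : ∀ m, m ≤ L → walkV A B v m = some (x m) := by
    intro m hm
    rcases hw : walkV A B v m with _ | z
    · exact absurd hw (hmin m (by omega))
    · simp [hxdef, hw]
  refine ⟨L, x, ?_, ?_, ?_, ?_⟩
  · simp [hxdef, walkV]
  · intro i j hi hj hij hne
    exact walk_inj hA hB hv j i (x i) hij (hx i hi) (hne ▸ hx j hj)
  · intro n hn
    obtain ⟨z, hz, hedge⟩ := walk_back (hx (n+1) (by omega))
    have : z = x n := by
      rw [hx n (by omega)] at hz
      cases hz; rfl
    rwa [this] at hedge
  · have hL1 : walkV A B v (L+1) = none := by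
      have : L + 1 = n0 := by omega
      rw [this]; exact hnone
    rw [walkV, hx L (le_refl L), Option.bind_some] at hL1
    exact stepM_none hL1

/-! ### Path data lemmas -/

def eP (x : ℕ → V) : ℕ → Sym2 V := fun n => s(x n, x (n+1))

def AeS (x : ℕ → V) (L : ℕ) : Set (Sym2 V) := eP x '' {n | n < L ∧ Even n}
def BeS (x : ℕ → V) (L : ℕ) : Set (Sym2 V) := eP x '' {n | n < L ∧ ¬ Even n}

section path

variable {L : ℕ} {x : ℕ → V}

/-- injectivity as an equality statement -/
lemma hinj' (hinj : ∀ i j, i ≤ L → j ≤ L → i < j → x i ≠ x j)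
    {i j : ℕ} (hi : i ≤ L) (hj : j ≤ L) (h : x i = x j) : i = j := by
  rcases Nat.lt_trichotomy i j with hlt | he | hlt
  · exact absurd h (hinj i j hi hj hlt)
  · exact he
  · exact absurd h.symm (hinj j i hj hi hlt)

lemma atA (hA : IsMatching G A)
    (hinj : ∀ i j, i ≤ L → j ≤ L → i < j → x i ≠ x j)
    (hedge : ∀ n, n < L → s(x n, x (n+1)) ∈ (if Even n then A else B))
    (hexp : ¬ CoveredBy (if Even L then A else B) (x L))
    {n : ℕ} (hn : n ≤ L) {f : Sym2 V} (hf : f ∈ A) (hxf : x n ∈ f) :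
    ∃ m, m < L ∧ Even m ∧ f = eP x m ∧ (n = m ∨ n = m + 1) := by
  by_cases hEn : Even n
  · rcases Nat.lt_or_ge n L with hnL | hnL
    · have he := hedge n hnL
      rw [if_pos hEn] at he
      exact ⟨n, hnL, hEn, edge_at_unique hA hf he hxf (Sym2.mem_mk_left _ _), Or.inl rfl⟩
    · exfalso
      obtain rfl : n = L := by omega
      rw [if_pos hEn] at hexp
      exact hexp ⟨f, hf, hxf⟩
  · have hpos : 0 < n := Nat.pos_of_ne_zero (by rintro rfl; exact hEn Even.zero)
    obtain ⟨m, rfl⟩ : ∃ m, n = m + 1 := ⟨n - 1, by omega⟩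
    have hEm : Even m := by
      rw [Nat.even_add_one] at hEn
      exact not_not.mp hEn
    have hmL : m < L := by omega
    have he := hedge m hmL
    rw [if_pos hEm] at he
    exact ⟨m, hmL, hEm, edge_at_unique hA hf he hxf (Sym2.mem_mk_right _ _), Or.inr rfl⟩

lemma atB (hB : IsMatching G B) (hv : ¬ CoveredBy B v) (hx0 : x 0 = v)
    (hinj : ∀ i j, i ≤ L → j ≤ L → i < j → x i ≠ x j)
    (hedge : ∀ n, n < L → s(x n, x (n+1)) ∈ (if Even n then A else B))
    (hexp : ¬ CoveredBy (if Even L then A else B) (x L))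
    {n : ℕ} (hn : n ≤ L) {f : Sym2 V} (hf : f ∈ B) (hxf : x n ∈ f) :
    ∃ m, m < L ∧ ¬ Even m ∧ f = eP x m ∧ (n = m ∨ n = m + 1) := by
  by_cases hEn : Even n
  · rcases Nat.eq_zero_or_pos n with rfl | hpos
    · exact absurd ⟨f, hf, hx0 ▸ hxf⟩ hv
    · obtain ⟨m, rfl⟩ : ∃ m, n = m + 1 := ⟨n - 1, by omega⟩
      have hEm : ¬ Even m := by
        rw [Nat.even_add_one] at hEn
        exact hEn
      have hmL : m < L := by omega
      have he := hedge m hmL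
      rw [if_neg hEm] at he
      exact ⟨m, hmL, hEm, edge_at_unique hB hf he hxf (Sym2.mem_mk_right _ _), Or.inr rfl⟩
  · rcases Nat.lt_or_ge n L with hnL | hnL
    · have he := hedge n hnL
      rw [if_neg hEn] at he
      exact ⟨n, hnL, hEn, edge_at_unique hB hf he hxf (Sym2.mem_mk_left _ _), Or.inl rfl⟩
    · exfalso
      obtain rfl : n = L := by omega
      rw [if_neg hEn] at hexp
      exact hexp ⟨f, hf, hxf⟩

end path

/-! ### Counting -/

lemma card_filter_even (L : ℕ) :
    ((Finset.range L).filter (fun n => Even n)).card = (L+1)/2 ∧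
    ((Finset.range L).filter (fun n => ¬ Even n)).card = L/2 := by
  induction L with
  | zero => simp
  | succ L IH =>
    obtain ⟨h1, h2⟩ := IH
    rw [Finset.range_add_one, Finset.filter_insert, Finset.filter_insert]
    by_cases h : Even L
    · rw [if_pos h, if_neg (not_not_intro h),
        Finset.card_insert_of_notMem (by simp)]
      have hm := Nat.even_iff.mp h
      omega
    · rw [if_neg h, if_pos h,
        Finset.card_insert_of_notMem (by simp)]
      have hm := Nat.not_even_iff.mp h
      omega

lemma ncard_evens (L : ℕ) : {n : ℕ | n < L ∧ Even n}.ncard = (L+1)/2 := by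
  classical
  rw [show {n : ℕ | n < L ∧ Even n} = ↑((Finset.range L).filter (fun n => Even n)) by
    ext n; simp [Finset.mem_filter, Finset.mem_range], Set.ncard_coe_finset]
  exact (card_filter_even L).1

lemma ncard_odds (L : ℕ) : {n : ℕ | n < L ∧ ¬ Even n}.ncard = L/2 := by
  classical
  rw [show {n : ℕ | n < L ∧ ¬ Even n} = ↑((Finset.range L).filter (fun n => ¬ Even n)) by
    ext n; simp [Finset.mem_filter, Finset.mem_range], Set.ncard_coe_finset]
  exact (card_filter_even L).2

/-! ### The swapped matchings -/

section swap

variable {L : ℕ} {x : ℕ → V}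

lemma eP_inj (hinj : ∀ i j, i ≤ L → j ≤ L → i < j → x i ≠ x j)
    {m m' : ℕ} (hm : m < L) (hm' : m' < L) (h : eP x m = eP x m') : m = m' := by
  simp only [eP, Sym2.eq_iff] at h
  rcases h with ⟨h1, h2⟩ | ⟨h1, h2⟩
  · exact hinj' hinj (by omega) (by omega) h1
  · have e1 := hinj' hinj (by omega) (by omega) h1
    have e2 := hinj' hinj (by omega) (by omega) h2
    omega

lemma claimA (hA : IsMatching G A)
    (hinj : ∀ i j, i ≤ L → j ≤ L → i < j → x i ≠ x j)
    (hedge : ∀ n, n < L → s(x n, x (n+1)) ∈ (if Even n then A else B))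
    (hexp : ¬ CoveredBy (if Even L then A else B) (x L))
    {g : Sym2 V} (hg : g ∈ A) {z : V} (hz : z ∈ g) {k : ℕ} (hk : k ≤ L)
    (hzx : z = x k) : g ∈ AeS x L := by
  subst hzx
  obtain ⟨m, hm, hEm, hfe, _⟩ := atA hA hinj hedge hexp hk hg hz
  exact ⟨m, ⟨hm, hEm⟩, hfe.symm⟩

lemma claimB (hB : IsMatching G B) (hv : ¬ CoveredBy B v) (hx0 : x 0 = v)
    (hinj : ∀ i j, i ≤ L → j ≤ L → i < j → x i ≠ x j)
    (hedge : ∀ n, n < L → s(x n, x (n+1)) ∈ (if Even n then A else B))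
    (hexp : ¬ CoveredBy (if Even L then A else B) (x L))
    {g : Sym2 V} (hg : g ∈ B) {z : V} (hz : z ∈ g) {k : ℕ} (hk : k ≤ L)
    (hzx : z = x k) : g ∈ BeS x L := by
  subst hzx
  obtain ⟨m, hm, hEm, hfe, _⟩ := atB hB hv hx0 hinj hedge hexp hk hg hz
  exact ⟨m, ⟨hm, hEm⟩, hfe.symm⟩

/-- vertices of a path edge -/
lemma mem_eP {z : V} {m : ℕ} (h : z ∈ eP x m) : z = x m ∨ z = x (m+1) := by
  rw [eP, Sym2.mem_iff] at h
  exact h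

/-- pairwise-disjointness of the swapped matching `(A \ Ae) ∪ Be`. -/
lemma swapA_PD (hA : IsMatching G A) (hB : IsMatching G B) (hv : ¬ CoveredBy B v)
    (hx0 : x 0 = v)
    (hinj : ∀ i j, i ≤ L → j ≤ L → i < j → x i ≠ x j)
    (hedge : ∀ n, n < L → s(x n, x (n+1)) ∈ (if Even n then A else B))
    (hexp : ¬ CoveredBy (if Even L then A else B) (x L)) :
    ∀ e₁ ∈ (A \ AeS x L) ∪ BeS x L, ∀ f ∈ (A \ AeS x L) ∪ BeS x L,
      e₁ ≠ f → ∀ z : V, z ∈ e₁ → z ∉ f := by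
  rintro e₁ (⟨he₁A, he₁Ae⟩ | ⟨m, ⟨hm, hEm⟩, rfl⟩) f hf hne z hz1 hz2
  · rcases hf with ⟨hfA, hfAe⟩ | ⟨m', ⟨hm', hEm'⟩, rfl⟩
    · exact hA.2 e₁ he₁A f hfA hne z hz1 hz2
    · -- f is a path B-edge, z on path, e₁ ∈ A ∖ Ae : contradiction
      rcases mem_eP hz2 with hzx | hzx
      · exact he₁Ae (claimA hA hinj hedge hexp he₁A hz1 (by omega) hzx)
      · exact he₁Ae (claimA hA hinj hedge hexp he₁A hz1 (by omega) hzx)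
  · rcases hf with ⟨hfA, hfAe⟩ | ⟨m', ⟨hm', hEm'⟩, rfl⟩
    · rcases mem_eP hz1 with hzx | hzx
      · exact hfAe (claimA hA hinj hedge hexp hfA hz2 (by omega) hzx)
      · exact hfAe (claimA hA hinj hedge hexp hfA hz2 (by omega) hzx)
    · -- both path B-edges
      have hne' : m ≠ m' := fun h => hne (by rw [h])
      rcases mem_eP hz1 with hzx1 | hzx1 <;> rcases mem_eP hz2 with hzx2 | hzx2 <;>
        [ (have := hinj' hinj (show m ≤ L by omega) (show m' ≤ L by omega)
            (hzx1 ▸ hzx2 ▸ rfl));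
          (have := hinj' hinj (show m ≤ L by omega) (show m'+1 ≤ L by omega)
            (hzx1 ▸ hzx2 ▸ rfl));
          (have := hinj' hinj (show m+1 ≤ L by omega) (show m' ≤ L by omega)
            (hzx1 ▸ hzx2 ▸ rfl));
          (have := hinj' hinj (show m+1 ≤ L by omega) (show m'+1 ≤ L by omega)
            (hzx1 ▸ hzx2 ▸ rfl))]
      · exact hne' this
      · exact hEm (this ▸ Nat.even_add_one.mpr hEm')
      · exact hEm' (this.symm ▸ Nat.even_add_one.mpr hEm)
      · exact hne' (by omega)

/-- the swapped matching misses `v`. -/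
lemma swapA_ncov (hA : IsMatching G A) (hB : IsMatching G B) (hv : ¬ CoveredBy B v)
    (hx0 : x 0 = v)
    (hinj : ∀ i j, i ≤ L → j ≤ L → i < j → x i ≠ x j)
    (hedge : ∀ n, n < L → s(x n, x (n+1)) ∈ (if Even n then A else B))
    (hexp : ¬ CoveredBy (if Even L then A else B) (x L)) :
    ¬ CoveredBy ((A \ AeS x L) ∪ BeS x L) v := by
  rintro ⟨e₁, (⟨heA, heAe⟩ | ⟨m, ⟨hm, hEm⟩, rfl⟩), hve⟩
  · exact heAe (claimA hA hinj hedge hexp heA hve (Nat.zero_le L) hx0.symm)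
  · rcases mem_eP hve with hzx | hzx
    · have h0 : (0:ℕ) = m := hinj' hinj (Nat.zero_le L) (by omega) (hx0.trans hzx)
      exact hEm (h0 ▸ Even.zero)
    · have h0 : (0:ℕ) = m + 1 := hinj' hinj (Nat.zero_le L) (by omega) (hx0.trans hzx)
      exact Nat.succ_ne_zero m h0.symm

end swap

section swap2

variable {L : ℕ} {x : ℕ → V}

lemma AeS_sub_A
    (hedge : ∀ n, n < L → s(x n, x (n+1)) ∈ (if Even n then A else B)) :
    AeS x L ⊆ A := by
  rintro g ⟨m, ⟨hm, hEm⟩, rfl⟩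
  have h := hedge m hm
  rw [if_pos hEm] at h
  exact h

lemma BeS_sub_B
    (hedge : ∀ n, n < L → s(x n, x (n+1)) ∈ (if Even n then A else B)) :
    BeS x L ⊆ B := by
  rintro g ⟨m, ⟨hm, hEm⟩, rfl⟩
  have h := hedge m hm
  rw [if_neg hEm] at h
  exact h

lemma BeS_disj_A (hA : IsMatching G A)
    (hinj : ∀ i j, i ≤ L → j ≤ L → i < j → x i ≠ x j)
    (hedge : ∀ n, n < L → s(x n, x (n+1)) ∈ (if Even n then A else B))
    (hexp : ¬ CoveredBy (if Even L then A else B) (x L)) :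
    ∀ g ∈ BeS x L, g ∉ A := by
  rintro g ⟨m, ⟨hm, hEm⟩, rfl⟩ hgA
  obtain ⟨m', hm', hEm', hfe, _⟩ := atA hA hinj hedge hexp (show m ≤ L by omega) hgA
    (by rw [eP]; exact Sym2.mem_mk_left _ _)
  have h := eP_inj hinj hm hm' hfe
  exact hEm (h ▸ hEm')

lemma AeS_disj_B (hB : IsMatching G B) (hv : ¬ CoveredBy B v) (hx0 : x 0 = v)
    (hinj : ∀ i j, i ≤ L → j ≤ L → i < j → x i ≠ x j)
    (hedge : ∀ n, n < L → s(x n, x (n+1)) ∈ (if Even n then A else B))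
    (hexp : ¬ CoveredBy (if Even L then A else B) (x L)) :
    ∀ g ∈ AeS x L, g ∉ B := by
  rintro g ⟨m, ⟨hm, hEm⟩, rfl⟩ hgB
  obtain ⟨m', hm', hEm', hfe, _⟩ := atB hB hv hx0 hinj hedge hexp (show m ≤ L by omega) hgB
    (by rw [eP]; exact Sym2.mem_mk_left _ _)
  have h := eP_inj hinj hm hm' hfe
  exact hEm' (h ▸ hEm)

lemma ncard_AeS (hinj : ∀ i j, i ≤ L → j ≤ L → i < j → x i ≠ x j) :
    (AeS x L).ncard = (L+1)/2 := by
  rw [AeS, Set.ncard_image_of_injOn (fun m hm m' hm' h => eP_inj hinj hm.1 hm'.1 h)]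
  exact ncard_evens L

lemma ncard_BeS (hinj : ∀ i j, i ≤ L → j ≤ L → i < j → x i ≠ x j) :
    (BeS x L).ncard = L/2 := by
  rw [BeS, Set.ncard_image_of_injOn (fun m hm m' hm' h => eP_inj hinj hm.1 hm'.1 h)]
  exact ncard_odds L

lemma swapA_ncard [Fintype V] (hL : Even L) (hA : IsMatching G A)
    (hinj : ∀ i j, i ≤ L → j ≤ L → i < j → x i ≠ x j)
    (hedge : ∀ n, n < L → s(x n, x (n+1)) ∈ (if Even n then A else B))
    (hexp : ¬ CoveredBy (if Even L then A else B) (x L)) :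
    ((A \ AeS x L) ∪ BeS x L).ncard = A.ncard := by
  have hsub : AeS x L ⊆ A := AeS_sub_A hedge
  have hdisj := BeS_disj_A hA hinj hedge hexp
  have h1 : Disjoint (A \ AeS x L) (BeS x L) :=
    Set.disjoint_right.mpr (by intro g hg hg'; exact hdisj g hg hg'.1)
  rw [Set.ncard_union_eq h1 (Set.toFinite _) (Set.toFinite _),
    Set.ncard_diff hsub (Set.toFinite _), ncard_AeS hinj, ncard_BeS hinj]
  have hle : (AeS x L).ncard ≤ A.ncard := Set.ncard_le_ncard hsub (Set.toFinite _)
  rw [ncard_AeS hinj] at hle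
  have hm := Nat.even_iff.mp hL
  omega

lemma swapB_ncard [Fintype V] (hL : ¬ Even L) (hB : IsMatching G B)
    (hv : ¬ CoveredBy B v) (hx0 : x 0 = v)
    (hinj : ∀ i j, i ≤ L → j ≤ L → i < j → x i ≠ x j)
    (hedge : ∀ n, n < L → s(x n, x (n+1)) ∈ (if Even n then A else B))
    (hexp : ¬ CoveredBy (if Even L then A else B) (x L)) :
    ((B \ BeS x L) ∪ AeS x L).ncard = B.ncard + 1 := by
  have hsub : BeS x L ⊆ B := BeS_sub_B hedge
  have hdisj := AeS_disj_B hB hv hx0 hinj hedge hexp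
  have h1 : Disjoint (B \ BeS x L) (AeS x L) :=
    Set.disjoint_right.mpr (by intro g hg hg'; exact hdisj g hg hg'.1)
  rw [Set.ncard_union_eq h1 (Set.toFinite _) (Set.toFinite _),
    Set.ncard_diff hsub (Set.toFinite _), ncard_AeS hinj, ncard_BeS hinj]
  have hle : (BeS x L).ncard ≤ B.ncard := Set.ncard_le_ncard hsub (Set.toFinite _)
  rw [ncard_BeS hinj] at hle
  have hm := Nat.not_even_iff.mp hL
  omega

lemma swapB_PD (hA : IsMatching G A) (hB : IsMatching G B) (hv : ¬ CoveredBy B v)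
    (hx0 : x 0 = v)
    (hinj : ∀ i j, i ≤ L → j ≤ L → i < j → x i ≠ x j)
    (hedge : ∀ n, n < L → s(x n, x (n+1)) ∈ (if Even n then A else B))
    (hexp : ¬ CoveredBy (if Even L then A else B) (x L)) :
    ∀ e₁ ∈ (B \ BeS x L) ∪ AeS x L, ∀ f ∈ (B \ BeS x L) ∪ AeS x L,
      e₁ ≠ f → ∀ z : V, z ∈ e₁ → z ∉ f := by
  rintro e₁ (⟨he₁B, he₁Be⟩ | ⟨m, ⟨hm, hEm⟩, rfl⟩) f hf hne z hz1 hz2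
  · rcases hf with ⟨hfB, hfBe⟩ | ⟨m', ⟨hm', hEm'⟩, rfl⟩
    · exact hB.2 e₁ he₁B f hfB hne z hz1 hz2
    · rcases mem_eP hz2 with hzx | hzx
      · exact he₁Be (claimB hB hv hx0 hinj hedge hexp he₁B hz1 (by omega) hzx)
      · exact he₁Be (claimB hB hv hx0 hinj hedge hexp he₁B hz1 (by omega) hzx)
  · rcases hf with ⟨hfB, hfBe⟩ | ⟨m', ⟨hm', hEm'⟩, rfl⟩
    · rcases mem_eP hz1 with hzx | hzx
      · exact hfBe (claimB hB hv hx0 hinj hedge hexp hfB hz2 (by omega) hzx)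
      · exact hfBe (claimB hB hv hx0 hinj hedge hexp hfB hz2 (by omega) hzx)
    · have hne' : m ≠ m' := fun h => hne (by rw [h])
      rcases mem_eP hz1 with hzx1 | hzx1 <;> rcases mem_eP hz2 with hzx2 | hzx2 <;>
        [ (have := hinj' hinj (show m ≤ L by omega) (show m' ≤ L by omega)
            (hzx1 ▸ hzx2 ▸ rfl));
          (have := hinj' hinj (show m ≤ L by omega) (show m'+1 ≤ L by omega)
            (hzx1 ▸ hzx2 ▸ rfl));
          (have := hinj' hinj (show m+1 ≤ L by omega) (show m' ≤ L by omega)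
            (hzx1 ▸ hzx2 ▸ rfl));
          (have := hinj' hinj (show m+1 ≤ L by omega) (show m'+1 ≤ L by omega)
            (hzx1 ▸ hzx2 ▸ rfl))]
      · exact hne' this
      · have h2 : Even (m' + 1) := by rw [← this]; exact hEm
        exact (Nat.even_add_one.mp h2) hEm'
      · have h2 : Even (m + 1) := by rw [this]; exact hEm'
        exact (Nat.even_add_one.mp h2) hEm
      · exact hne' (by omega)

end swap2

/-! ### Existence of maximum matchings and `deleteVert` facts -/

lemma exists_max [Fintype V] (G : SimpleGraph V) : ∃ M, IsMaxMatching G M := by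
  classical
  set T : Set ℕ := {n | ∃ N : Set (Sym2 V), IsMatching G N ∧ N.ncard = n} with hT
  have h0 : (0 : ℕ) ∈ T := ⟨∅, ⟨Set.empty_subset _, by simp⟩, by simp⟩
  have hbdd : BddAbove T := by
    refine ⟨(Set.univ : Set (Sym2 V)).ncard, ?_⟩
    rintro n ⟨N, _, rfl⟩
    exact Set.ncard_le_ncard (Set.subset_univ N) Set.finite_univ
  obtain ⟨M, hM, hMc⟩ := Nat.sSup_mem ⟨0, h0⟩ hbdd
  exact ⟨M, hM, fun N hN => hMc ▸ le_csSup hbdd ⟨N, hN, rfl⟩⟩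

lemma deleteVert_edge_sub (G : SimpleGraph V) (w : V) :
    (deleteVert G w).edgeSet ⊆ G.edgeSet := by
  intro e
  induction e using Sym2.ind with
  | _ a b => exact fun h => by obtain ⟨h1, -, -⟩ := h; exact h1

lemma deleteVert_not_mem {G : SimpleGraph V} {w : V} {e : Sym2 V}
    (he : e ∈ (deleteVert G w).edgeSet) : w ∉ e := by
  induction e using Sym2.ind with
  | _ a b =>
    rw [Sym2.mem_iff]
    rintro (rfl | rfl)
    · obtain ⟨-, h2, -⟩ := he; exact h2 rfl
    · obtain ⟨-, -, h3⟩ := he; exact h3 rfl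

lemma deleteVert_mem {G : SimpleGraph V} {w a b : V} (h : G.Adj a b)
    (ha : a ≠ w) (hb : b ≠ w) : s(a,b) ∈ (deleteVert G w).edgeSet :=
  by exact (⟨h, ha, hb⟩ : G.Adj a b ∧ a ≠ w ∧ b ≠ w)

end Stmt15

/-- Monotonicity of the matching selector: for `G' = G - w` with `w ∈ Y`,
`𝔐(G) ∩ X ⊇ 𝔐(G') ∩ X` and `𝔐(G) ∩ (Y \ {w}) ⊆ 𝔐(G') ∩ Y`. -/


theorem stmt_15 {V : Type*} [Fintype V] (G : SimpleGraph V) (X Y : Set V)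
    (hB : IsBipartition G X Y) (w : V) (hw : w ∈ Y) :
    (∀ v ∈ X, CoveredByAllMax (deleteVert G w) v → CoveredByAllMax G v) ∧
    (∀ v ∈ Y, v ≠ w → CoveredByAllMax G v → CoveredByAllMax (deleteVert G w) v) := by
  classical
  obtain ⟨hXY, hdisj, hadjXY⟩ := hB
  constructor
  · -- Claim 1
    intro v hvX hcov' M hM
    by_contra hvM
    obtain ⟨N, hN⟩ := Stmt15.exists_max (deleteVert G w)
    have hNG : IsMatching G N :=
      ⟨fun e he => Stmt15.deleteVert_edge_sub G w (hN.1.1 he), hN.1.2⟩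
    obtain ⟨L, x, hx0, hinj, hedge, hexp⟩ := Stmt15.core hNG hM.1 hvM
    have hadj : ∀ n, n < L → G.Adj (x n) (x (n+1)) := by
      intro n hn
      have h := hedge n hn
      split at h
      · exact G.mem_edgeSet.mp (hNG.1 h)
      · exact G.mem_edgeSet.mp (hM.1.1 h)
    have hside : ∀ n, n ≤ L → (x n ∈ X ↔ Even n) := by
      intro n
      induction n with
      | zero => intro _; simpa [hx0] using hvX
      | succ n IHn =>
        intro hn
        have IH := IHn (by omega)
        rcases hadjXY _ _ (hadj n (by omega)) with ⟨h1, h2⟩ | ⟨h1, h2⟩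
        · have hEn : Even n := IH.mp h1
          constructor
          · intro hmem; exact absurd h2 (Set.disjoint_left.mp hdisj hmem)
          · intro hE; rw [Nat.even_add_one] at hE; exact absurd hEn hE
        · have hEn : ¬ Even n := fun hE => Set.disjoint_left.mp hdisj (IH.mpr hE) h1
          constructor
          · intro _; rw [Nat.even_add_one]; exact hEn
          · intro _; exact h2
    have hNw : ∀ e ∈ N, w ∉ e := fun e he => Stmt15.deleteVert_not_mem (hN.1.1 he)
    have hwne : ∀ n, n ≤ L → x n ≠ w := by
      intro n hn
      by_cases hEn : Even n
      · rcases Nat.lt_or_ge n L with hnL | hnL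
        · have h := hedge n hnL
          rw [if_pos hEn] at h
          exact fun hq => hNw _ h (by rw [← hq]; exact Sym2.mem_mk_left _ _)
        · obtain rfl : n = L := by omega
          intro hq
          exact Set.disjoint_left.mp hdisj ((hside n hn).mpr hEn) (by rw [hq]; exact hw)
      · have hn1 : 0 < n := Nat.pos_of_ne_zero (by rintro rfl; exact hEn Even.zero)
        obtain ⟨m, rfl⟩ : ∃ m, n = m + 1 := ⟨n - 1, by omega⟩
        have hEm : Even m := by rwa [Nat.even_add_one, not_not] at hEn
        have h := hedge m (by omega)
        rw [if_pos hEm] at h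
        exact fun hq => hNw _ h (by rw [← hq]; exact Sym2.mem_mk_right _ _)
    by_cases hL : Even L
    · -- N' is a maximum matching of G - w missing v
      have hA'sub : (N \ Stmt15.AeS x L) ∪ Stmt15.BeS x L ⊆ (deleteVert G w).edgeSet := by
        rintro g (⟨hgN, -⟩ | ⟨m, ⟨hm, hEm⟩, rfl⟩)
        · exact hN.1.1 hgN
        · have h := hedge m hm
          rw [if_neg hEm] at h
          exact Stmt15.deleteVert_mem (G.mem_edgeSet.mp (hM.1.1 h))
            (hwne m (by omega)) (hwne (m+1) (by omega))
      have hA'match : IsMatching (deleteVert G w) ((N \ Stmt15.AeS x L) ∪ Stmt15.BeS x L) :=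
        ⟨hA'sub, Stmt15.swapA_PD hNG hM.1 hvM hx0 hinj hedge hexp⟩
      have hA'card := Stmt15.swapA_ncard hL hNG hinj hedge hexp
      have hA'max : IsMaxMatching (deleteVert G w) ((N \ Stmt15.AeS x L) ∪ Stmt15.BeS x L) :=
        ⟨hA'match, fun P hP => (hN.2 P hP).trans hA'card.symm.le⟩
      exact Stmt15.swapA_ncov hNG hM.1 hvM hx0 hinj hedge hexp (hcov' _ hA'max)
    · -- M can be augmented, contradiction
      have hB'sub : (M \ Stmt15.BeS x L) ∪ Stmt15.AeS x L ⊆ G.edgeSet := by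
        rintro g (⟨hgM, -⟩ | ⟨m, ⟨hm, hEm⟩, rfl⟩)
        · exact hM.1.1 hgM
        · have h := hedge m hm
          rw [if_pos hEm] at h
          exact hNG.1 h
      have hB'match : IsMatching G ((M \ Stmt15.BeS x L) ∪ Stmt15.AeS x L) :=
        ⟨hB'sub, Stmt15.swapB_PD hNG hM.1 hvM hx0 hinj hedge hexp⟩
      have hB'card := Stmt15.swapB_ncard hL hM.1 hvM hx0 hinj hedge hexp
      have := hM.2 _ hB'match
      omega
  · -- Claim 2
    intro v hvY hvw hcov N hN'
    by_contra hvN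
    obtain ⟨M, hM⟩ := Stmt15.exists_max G
    have hNG : IsMatching G N :=
      ⟨fun e he => Stmt15.deleteVert_edge_sub G w (hN'.1.1 he), hN'.1.2⟩
    obtain ⟨L, x, hx0, hinj, hedge, hexp⟩ := Stmt15.core hM.1 hNG hvN
    have hadj : ∀ n, n < L → G.Adj (x n) (x (n+1)) := by
      intro n hn
      have h := hedge n hn
      split at h
      · exact G.mem_edgeSet.mp (hM.1.1 h)
      · exact G.mem_edgeSet.mp (hNG.1 h)
    have hside : ∀ n, n ≤ L → (x n ∈ Y ↔ Even n) := by
      intro n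
      induction n with
      | zero => intro _; simpa [hx0] using hvY
      | succ n IHn =>
        intro hn
        have IH := IHn (by omega)
        rcases hadjXY _ _ (hadj n (by omega)) with ⟨h1, h2⟩ | ⟨h1, h2⟩
        · have hEn : ¬ Even n := fun hE => Set.disjoint_left.mp hdisj h1 (IH.mpr hE)
          constructor
          · intro _; rw [Nat.even_add_one]; exact hEn
          · intro _; exact h2
        · have hEn : Even n := IH.mp h1
          constructor
          · intro hmem; exact absurd hmem (fun hq => Set.disjoint_left.mp hdisj h2 hq)
          · intro hE; rw [Nat.even_add_one] at hE; exact absurd hEn hE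
    have hNw : ∀ e ∈ N, w ∉ e := fun e he => Stmt15.deleteVert_not_mem (hN'.1.1 he)
    have hwne : ∀ n, n ≤ L → x n ≠ w := by
      intro n hn
      by_cases hEn : Even n
      · rcases Nat.eq_zero_or_pos n with rfl | hpos
        · rw [hx0]; exact hvw
        · obtain ⟨m, rfl⟩ : ∃ m, n = m + 1 := ⟨n - 1, by omega⟩
          have hEm : ¬ Even m := by rwa [Nat.even_add_one] at hEn
          have h := hedge m (by omega)
          rw [if_neg hEm] at h
          exact fun hq => hNw _ h (by rw [← hq]; exact Sym2.mem_mk_right _ _)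
      · rcases Nat.lt_or_ge n L with hnL | hnL
        · have h := hedge n hnL
          rw [if_neg hEn] at h
          exact fun hq => hNw _ h (by rw [← hq]; exact Sym2.mem_mk_left _ _)
        · obtain rfl : n = L := by omega
          intro hq
          exact hEn ((hside n hn).mp (by rw [hq]; exact hw))
    by_cases hL : Even L
    · -- M' is a maximum matching of G missing v
      have hA'sub : (M \ Stmt15.AeS x L) ∪ Stmt15.BeS x L ⊆ G.edgeSet := by
        rintro g (⟨hgM, -⟩ | ⟨m, ⟨hm, hEm⟩, rfl⟩)
        · exact hM.1.1 hgM
        · have h := hedge m hm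
          rw [if_neg hEm] at h
          exact hNG.1 h
      have hA'match : IsMatching G ((M \ Stmt15.AeS x L) ∪ Stmt15.BeS x L) :=
        ⟨hA'sub, Stmt15.swapA_PD hM.1 hNG hvN hx0 hinj hedge hexp⟩
      have hA'card := Stmt15.swapA_ncard hL hM.1 hinj hedge hexp
      have hA'max : IsMaxMatching G ((M \ Stmt15.AeS x L) ∪ Stmt15.BeS x L) :=
        ⟨hA'match, fun P hP => (hM.2 P hP).trans hA'card.symm.le⟩
      exact Stmt15.swapA_ncov hM.1 hNG hvN hx0 hinj hedge hexp (hcov _ hA'max)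
    · -- N can be augmented in G - w, contradiction
      have hB'sub : (N \ Stmt15.BeS x L) ∪ Stmt15.AeS x L ⊆ (deleteVert G w).edgeSet := by
        rintro g (⟨hgN, -⟩ | ⟨m, ⟨hm, hEm⟩, rfl⟩)
        · exact hN'.1.1 hgN
        · have h := hedge m hm
          rw [if_pos hEm] at h
          exact Stmt15.deleteVert_mem (G.mem_edgeSet.mp (hM.1.1 h))
            (hwne m (by omega)) (hwne (m+1) (by omega))
      have hB'match : IsMatching (deleteVert G w) ((N \ Stmt15.BeS x L) ∪ Stmt15.AeS x L) :=
        ⟨hB'sub, Stmt15.swapB_PD hM.1 hNG hvN hx0 hinj hedge hexp⟩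
      have hB'card := Stmt15.swapB_ncard hL hNG hvN hx0 hinj hedge hexp
      have := hN'.2 _ hB'match
      omega
end

section
/- Let G be a finite bipartite graph with bipartition (X, Y) and let M be any maximum matching of G. Let A_0 = X ∖ V(M) be the set of vertices of X not covered by M, and B_0 = Y ∖ V(M) the set of vertices of Y not covered by M. Let A be the set of vertices of X reachable from a vertex of A_0 by an M-alternating path, and B the set of vertices of Y reachable from a vertex of B_0 by an M-alternating path. Then a vertex v of G is covered by every maximum matching of G if and only if v ∉ A ∪ B. -/
namespace Stmt16Aux

open List

variable {V : Type*}

def nthv (d : V) (p : List V) (i : ℕ) : V := p.getD i d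

def edg (d : V) (p : List V) (i : ℕ) : Sym2 V := s(nthv d p i, nthv d p (i+1))

lemma nthv_eq_get (d : V) {p : List V} {i : ℕ} (h : i < p.length) :
    nthv d p i = p.get ⟨i, h⟩ := by
  rw [nthv, List.getD_eq_getElem p d h, List.get_eq_getElem]

lemma nthv_inj (d : V) {p : List V} (hnd : p.Nodup) {i j : ℕ}
    (hi : i < p.length) (hj : j < p.length) (h : nthv d p i = nthv d p j) : i = j := by
  rw [nthv_eq_get d hi, nthv_eq_get d hj, hnd.get_inj_iff] at h
  simpa using congrArg Fin.val h

lemma adj_of_chain (d : V) {G : SimpleGraph V} {p : List V} (hch : p.Chain' G.Adj)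
    {i : ℕ} (h : i + 1 < p.length) : G.Adj (nthv d p i) (nthv d p (i+1)) := by
  unfold List.Chain' at hch
  rw [List.isChain_iff_getElem] at hch
  rw [nthv_eq_get d (by omega), nthv_eq_get d h]
  exact hch i (by omega)

lemma matching_unique {G : SimpleGraph V} {M : Set (Sym2 V)} (hM : IsMatching G M)
    {e f : Sym2 V} {x : V} (he : e ∈ M) (hf : f ∈ M) (hxe : x ∈ e) (hxf : x ∈ f) : e = f := by
  by_contra h
  exact hM.2 e he f hf h x hxe hxf

lemma edg_inj (d : V) {p : List V} (hnd : p.Nodup) {i j : ℕ}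
    (hi : i + 1 < p.length) (hj : j + 1 < p.length) (h : edg d p i = edg d p j) : i = j := by
  rw [edg, edg, Sym2.eq_iff] at h
  rcases h with ⟨h1, _⟩ | ⟨h1, h2⟩
  · exact nthv_inj d hnd (by omega) (by omega) h1
  · have e1 := nthv_inj d hnd (by omega) (by omega) h1
    have e2 := nthv_inj d hnd (by omega) (by omega) h2
    omega

lemma mem_edg_left (d : V) (p : List V) (i : ℕ) : nthv d p i ∈ edg d p i :=
  Sym2.mem_iff.mpr (Or.inl rfl)

lemma mem_edg_right (d : V) (p : List V) (i : ℕ) : nthv d p (i+1) ∈ edg d p i :=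
  Sym2.mem_iff.mpr (Or.inr rfl)

lemma mem_edg_iff (d : V) (p : List V) (i : ℕ) {x : V} :
    x ∈ edg d p i ↔ x = nthv d p i ∨ x = nthv d p (i+1) := Sym2.mem_iff

lemma nthv_reverse (d : V) (p : List V) {i : ℕ} (h : i < p.length) :
    nthv d p.reverse i = nthv d p (p.length - 1 - i) := by
  rw [nthv, nthv, List.getD_eq_getElem _ _ (by simpa using h),
    List.getD_eq_getElem _ _ (by omega)]
  exact List.getElem_reverse _

lemma head?_eq_nthv (d : V) {p : List V} (hne : p ≠ []) :
    p.head? = some (nthv d p 0) := by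
  have h : 0 < p.length := List.length_pos_iff.mpr hne
  rw [List.head?_eq_getElem?, List.getElem?_eq_getElem h, nthv, List.getD_eq_getElem p d h]

lemma getLast?_eq_nthv (d : V) {p : List V} (hne : p ≠ []) :
    p.getLast? = some (nthv d p (p.length - 1)) := by
  have h : p.length - 1 < p.length := by
    have := List.length_pos_iff.mpr hne; omega
  rw [List.getLast?_eq_getElem?, List.getElem?_eq_getElem h, nthv, List.getD_eq_getElem p d h]

lemma count_parity (n : ℕ) :
    ((Finset.range n).filter (fun i => i % 2 = 0)).card = (n+1)/2 ∧
    ((Finset.range n).filter (fun i => i % 2 = 1)).card = n/2 := by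
  induction n with
  | zero => simp
  | succ n ih =>
    obtain ⟨ih1, ih2⟩ := ih
    rw [Finset.range_add_one, Finset.filter_insert, Finset.filter_insert]
    by_cases h : n % 2 = 0
    · rw [if_pos h, if_neg (by omega),
        Finset.card_insert_of_notMem (fun hc => Finset.notMem_range_self (Finset.mem_filter.1 hc).1)]
      omega
    · rw [if_neg h, if_pos (by omega),
        Finset.card_insert_of_notMem (fun hc => Finset.notMem_range_self (Finset.mem_filter.1 hc).1)]
      omega

lemma idxset_ncard (n r : ℕ) :
    {i : ℕ | i + 1 < n ∧ i % 2 = r}.ncard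
      = ((Finset.range (n-1)).filter (fun i => i % 2 = r)).card := by
  rw [← Set.ncard_coe_finset]
  congr 1
  ext i
  simp only [Set.mem_setOf_eq, Finset.coe_filter, Finset.mem_range, Set.mem_setOf_eq]
  constructor
  · rintro ⟨h1, h2⟩; exact ⟨by omega, h2⟩
  · rintro ⟨h1, h2⟩; exact ⟨by omega, h2⟩



lemma keyN {G : SimpleGraph V} {N : Set (Sym2 V)} (hN : IsMatching G N)
    (d : V) {p : List V} (hnd : p.Nodup)
    (Hedge : ∀ i, i + 1 < p.length → (edg d p i ∈ N ↔ i % 2 = 1))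
    (Hhead : ¬ CoveredBy N (nthv d p 0)) :
    ∀ j, j < p.length → (j % 2 = 0 ∨ j + 1 < p.length) → ∀ f ∈ N, nthv d p j ∈ f →
      ∃ i, i + 1 < p.length ∧ i % 2 = 1 ∧ f = edg d p i ∧ (j = i ∨ j = i + 1) := by
  intro j hj hguard f hf hxf
  by_cases hj2 : j % 2 = 1
  · have hjk : j + 1 < p.length := by omega
    refine ⟨j, hjk, hj2, ?_, Or.inl rfl⟩
    exact matching_unique hN hf ((Hedge j hjk).mpr hj2) hxf (mem_edg_left d p j)
  · rcases Nat.eq_zero_or_pos j with h0 | hpos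
    · exact absurd ⟨f, hf, h0 ▸ hxf⟩ Hhead
    · have hij : (j-1) + 1 < p.length := by omega
      refine ⟨j-1, hij, by omega, ?_, Or.inr (by omega)⟩
      have hx2 : nthv d p j ∈ edg d p (j-1) := by
        have := mem_edg_right d p (j-1)
        rwa [show j - 1 + 1 = j by omega] at this
      exact matching_unique hN hf ((Hedge _ hij).mpr (by omega)) hxf hx2

lemma keyM {G : SimpleGraph V} {M : Set (Sym2 V)} (hM : IsMatching G M)
    (d : V) {p : List V} (hnd : p.Nodup)
    (Hedge : ∀ i, i + 1 < p.length → (edg d p i ∈ M ↔ i % 2 = 0)) :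
    ∀ j, j < p.length → (j % 2 = 1 ∨ j + 1 < p.length) → ∀ f ∈ M, nthv d p j ∈ f →
      ∃ i, i + 1 < p.length ∧ i % 2 = 0 ∧ f = edg d p i ∧ (j = i ∨ j = i + 1) := by
  intro j hj hguard f hf hxf
  by_cases hj2 : j % 2 = 0
  · have hjk : j + 1 < p.length := by omega
    refine ⟨j, hjk, hj2, ?_, Or.inl rfl⟩
    exact matching_unique hM hf ((Hedge j hjk).mpr hj2) hxf (mem_edg_left d p j)
  · have hij : (j-1) + 1 < p.length := by omega
    refine ⟨j-1, hij, by omega, ?_, Or.inr (by omega)⟩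
    have hx2 : nthv d p j ∈ edg d p (j-1) := by
      have := mem_edg_right d p (j-1)
      rwa [show j - 1 + 1 = j by omega] at this
    exact matching_unique hM hf ((Hedge _ hij).mpr (by omega)) hxf hx2

lemma swap_lemma [Fintype V] {G : SimpleGraph V} {N : Set (Sym2 V)} (hN : IsMatching G N)
    (d : V) {p : List V} (hne : p ≠ []) (hnd : p.Nodup) (hch : p.Chain' G.Adj)
    (Hedge : ∀ i, i + 1 < p.length → (edg d p i ∈ N ↔ i % 2 = 1))
    (Hhead : ¬ CoveredBy N (nthv d p 0))
    (Hlast : (p.length - 1) % 2 = 1 → ¬ CoveredBy N (nthv d p (p.length - 1))) :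
    ∃ N' : Set (Sym2 V), IsMatching G N' ∧
      N'.ncard + (p.length - 1) / 2 = N.ncard + p.length / 2 ∧
      ((p.length - 1) % 2 = 0 → ¬ CoveredBy N' (nthv d p (p.length - 1))) := by
  classical
  have hn1 : 1 ≤ p.length := List.length_pos_iff.mpr hne
  set O : Set (Sym2 V) := (fun i => edg d p i) '' {i | i + 1 < p.length ∧ i % 2 = 1} with hO
  set E : Set (Sym2 V) := (fun i => edg d p i) '' {i | i + 1 < p.length ∧ i % 2 = 0} with hE
  have hOsub : O ⊆ N := by
    rintro e ⟨i, ⟨hi1, hi2⟩, rfl⟩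
    exact (Hedge i hi1).mpr hi2
  have hEnotN : ∀ e ∈ E, e ∉ N := by
    rintro e ⟨i, ⟨hi1, hi2⟩, rfl⟩ heN
    have := (Hedge i hi1).mp heN
    omega
  -- the key lemma, with the j = last ∧ odd case folded in
  have key : ∀ j, j < p.length → ∀ f ∈ N, nthv d p j ∈ f →
      ∃ i, i + 1 < p.length ∧ i % 2 = 1 ∧ f = edg d p i ∧ (j = i ∨ j = i + 1) := by
    intro j hj f hf hxf
    by_cases hg : j % 2 = 0 ∨ j + 1 < p.length
    · exact keyN hN d hnd Hedge Hhead j hj hg f hf hxf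
    · push_neg at hg
      have hjl : j = p.length - 1 := by omega
      exact absurd ⟨f, hf, hjl ▸ hxf⟩ (Hlast (by omega))
  refine ⟨(N \ O) ∪ E, ⟨?_, ?_⟩, ?_, ?_⟩
  · -- subset of edgeSet
    rintro e (⟨heN, -⟩ | ⟨i, ⟨hi1, -⟩, rfl⟩)
    · exact hN.1 heN
    · exact (adj_of_chain d hch hi1)
  · -- pairwise disjoint
    rintro e he f hf hef x hxe hxf
    rcases he with ⟨heN, heO⟩ | ⟨i, ⟨hi1, hi2⟩, rfl⟩
    · rcases hf with ⟨hfN, hfO⟩ | ⟨j, ⟨hj1, hj2⟩, rfl⟩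
      · exact hN.2 e heN f hfN hef x hxe hxf
      · -- f is an even path edge, e ∈ N \ O
        rcases Sym2.mem_iff.mp hxf with h | h
        · obtain ⟨i', hi'1, hi'2, hfe, -⟩ := key j (by omega) e heN (h ▸ hxe)
          exact heO ⟨i', ⟨hi'1, hi'2⟩, hfe.symm⟩
        · obtain ⟨i', hi'1, hi'2, hfe, -⟩ := key (j+1) (by omega) e heN (h ▸ hxe)
          exact heO ⟨i', ⟨hi'1, hi'2⟩, hfe.symm⟩
    · rcases hf with ⟨hfN, hfO⟩ | ⟨j, ⟨hj1, hj2⟩, rfl⟩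
      · rcases Sym2.mem_iff.mp hxe with h | h
        · obtain ⟨i', hi'1, hi'2, hfe, -⟩ := key i (by omega) f hfN (h ▸ hxf)
          exact hfO ⟨i', ⟨hi'1, hi'2⟩, hfe.symm⟩
        · obtain ⟨i', hi'1, hi'2, hfe, -⟩ := key (i+1) (by omega) f hfN (h ▸ hxf)
          exact hfO ⟨i', ⟨hi'1, hi'2⟩, hfe.symm⟩
      · -- both even path edges
        have hij : i ≠ j := fun h => hef (by rw [h])
        rcases Sym2.mem_iff.mp hxe with h1 | h1 <;> rcases Sym2.mem_iff.mp hxf with h2 | h2 <;>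
        · have := nthv_inj d hnd (by omega) (by omega) (h1.symm.trans h2)
          omega
  · -- cardinality
    have hiO : Set.InjOn (fun i => edg d p i) {i | i + 1 < p.length ∧ i % 2 = 1} :=
      fun a ha b hb h => edg_inj d hnd ha.1 hb.1 h
    have hiE : Set.InjOn (fun i => edg d p i) {i | i + 1 < p.length ∧ i % 2 = 0} :=
      fun a ha b hb h => edg_inj d hnd ha.1 hb.1 h
    have hcO : O.ncard = (p.length - 1) / 2 := by
      rw [hO, Set.ncard_image_of_injOn hiO, idxset_ncard, (count_parity (p.length - 1)).2]
    have hcE : E.ncard = p.length / 2 := by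
      rw [hE, Set.ncard_image_of_injOn hiE, idxset_ncard, (count_parity (p.length - 1)).1]
      omega
    have hdisj : Disjoint (N \ O) E := by
      rw [Set.disjoint_left]
      rintro e ⟨heN, -⟩ heE
      exact hEnotN e heE heN
    have hOleN : O.ncard ≤ N.ncard := Set.ncard_le_ncard hOsub (Set.toFinite N)
    rw [Set.ncard_union_eq hdisj (Set.toFinite _) (Set.toFinite _), Set.ncard_diff hOsub, hcO, hcE]
    omega
  · -- last vertex uncovered when even
    intro hk ⟨f, hf, hxf⟩
    rcases hf with ⟨hfN, hfO⟩ | ⟨i, ⟨hi1, hi2⟩, rfl⟩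
    · obtain ⟨i', hi'1, hi'2, hfe, -⟩ := key (p.length - 1) (by omega) f hfN hxf
      exact hfO ⟨i', ⟨hi'1, hi'2⟩, hfe.symm⟩
    · rcases Sym2.mem_iff.mp hxf with h | h
      · have := nthv_inj d hnd (by omega) (by omega) h
        omega
      · have := nthv_inj d hnd (by omega) (by omega) h
        omega



lemma side_parity {G : SimpleGraph V} {X Y : Set V} (hB : IsBipartition G X Y)
    (d : V) {p : List V} (hch : p.Chain' G.Adj) :
    ∀ j, j < p.length → (nthv d p j ∈ X ↔ (nthv d p 0 ∈ X ↔ j % 2 = 0)) := by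
  have flip : ∀ a b, G.Adj a b → (a ∈ X ↔ b ∉ X) := by
    intro a b hab
    rcases hB.2.2 a b hab with ⟨ha, hb⟩ | ⟨ha, hb⟩
    · have : b ∉ X := fun hbX => Set.disjoint_left.1 hB.2.1 hbX hb
      tauto
    · have : a ∉ X := fun haX => Set.disjoint_left.1 hB.2.1 haX ha
      tauto
  intro j
  induction j with
  | zero => intro _; simp
  | succ j ih =>
    intro h
    have hj := ih (by omega)
    have hf := flip _ _ (adj_of_chain d hch h)
    have hpar : ((j+1) % 2 = 0) ↔ ¬ (j % 2 = 0) := by omega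
    tauto

lemma nthv_append (d : V) (p : List V) (w : V) {i : ℕ} (hi : i < p.length) :
    nthv d (p ++ [w]) i = nthv d p i := by
  rw [nthv, nthv, List.getD_eq_getElem _ _ (by simp; omega), List.getD_eq_getElem _ _ hi]
  exact List.getElem_append_left hi

lemma nthv_append_last (d : V) (p : List V) (w : V) :
    nthv d (p ++ [w]) p.length = w := by
  rw [nthv, List.getD_eq_getElem _ _ (by simp)]
  exact List.getElem_concat_length rfl _

lemma build_path [Fintype V] {G : SimpleGraph V} {M N : Set (Sym2 V)}
    (hM : IsMatching G M) (hN : IsMatching G N)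
    (hNmax : ∀ P : Set (Sym2 V), IsMatching G P → P.ncard ≤ N.ncard)
    {v : V} (hvN : ¬ CoveredBy N v) :
    ∃ p : List V, p ≠ [] ∧ p.Nodup ∧ p.Chain' G.Adj ∧ nthv v p 0 = v ∧
      (∀ i, i + 1 < p.length → (edg v p i ∈ M ↔ i % 2 = 0)) ∧
      (∀ i, i + 1 < p.length → (edg v p i ∈ N ↔ i % 2 = 1)) ∧
      (p.length - 1) % 2 = 0 ∧ ¬ CoveredBy M (nthv v p (p.length - 1)) := by
  classical
  have main : ∀ m : ℕ, ∀ p : List V, p ≠ [] → p.Nodup → p.Chain' G.Adj → nthv v p 0 = v →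
      (∀ i, i + 1 < p.length → (edg v p i ∈ M ↔ i % 2 = 0)) →
      (∀ i, i + 1 < p.length → (edg v p i ∈ N ↔ i % 2 = 1)) →
      Fintype.card V < p.length + m →
      ∃ p' : List V, p' ≠ [] ∧ p'.Nodup ∧ p'.Chain' G.Adj ∧ nthv v p' 0 = v ∧
        (∀ i, i + 1 < p'.length → (edg v p' i ∈ M ↔ i % 2 = 0)) ∧
        (∀ i, i + 1 < p'.length → (edg v p' i ∈ N ↔ i % 2 = 1)) ∧
        (p'.length - 1) % 2 = 0 ∧ ¬ CoveredBy M (nthv v p' (p'.length - 1)) := by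
    intro m
    induction m with
    | zero =>
      intro p hne hnd _ _ _ _ hcard
      exact absurd hnd.length_le_card (by omega)
    | succ m ih =>
      intro p hne hnd hch hhd HM HN hcard
      have hn1 : 1 ≤ p.length := List.length_pos_iff.mpr hne
      set n := p.length with hn
      set k := n - 1 with hk
      set z := nthv v p k with hz
      have hHhead : ¬ CoveredBy N (nthv v p 0) := by rw [hhd]; exact hvN
      by_cases hkp : k % 2 = 0
      · by_cases hzM : CoveredBy M z
        · -- extend with the M-partner of z
          obtain ⟨e, heM, hze⟩ := hzM
          set w := Sym2.Mem.other hze with hw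
          have hsw : s(z, w) = e := Sym2.other_spec hze
          have hadj : G.Adj z w := (SimpleGraph.mem_edgeSet G).mp (hsw ▸ hM.1 heM)
          have hzw : z ≠ w := hadj.ne
          have hwe : w ∈ e := hsw ▸ Sym2.mem_iff.mpr (Or.inr rfl)
          -- w is not on p
          have hwp : ∀ j, j < n → nthv v p j ≠ w := by
            intro j hj heq
            rcases Nat.lt_or_ge j k with hjk | hjk
            · obtain ⟨i, hi1, hi2, hfe, -⟩ :=
                keyM hM v hnd HM j (by omega) (Or.inr (by omega)) e heM (heq ▸ hwe)
              have hzi : z = nthv v p i ∨ z = nthv v p (i+1) :=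
                (mem_edg_iff v p i).mp (hfe ▸ hze)
              rcases hzi with h | h
              · have := nthv_inj v hnd (by omega) (by omega) h
                omega
              · have := nthv_inj v hnd (by omega) (by omega) h
                omega
            · have hjk' : j = k := by omega
              exact hzw ((hjk' ▸ heq).symm ▸ rfl)
          -- e is not in N
          have heN : e ∉ N := by
            intro heN
            obtain ⟨i, hi1, hi2, hfe, hki⟩ :=
              keyN hN v hnd HN hHhead k (by omega) (Or.inl hkp) e heN hze
            rcases hki with h | h
            · omega
            · -- k = i + 1, so w = nthv v p i
              have : w = nthv v p i ∨ w = nthv v p (i+1) :=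
                (mem_edg_iff v p i).mp (hfe ▸ hwe)
              rcases this with h2 | h2
              · exact hwp i (by omega) h2.symm
              · exact hzw (by rw [h2, ← h, ← hz])
          -- the extended list
          refine ih (p ++ [w]) (by simp) ?_ ?_ ?_ ?_ ?_ (by simp; omega)
          · rw [List.nodup_append]
            refine ⟨hnd, by simp, ?_⟩
            intro a ha b hb' hab
            simp at hb'
            have hb : a = w := hab.trans hb'
            obtain ⟨⟨j, hj⟩, hja⟩ := List.mem_iff_get.mp ha
            exact hwp j hj (by rw [nthv_eq_get v hj, hja, hb])
          · unfold List.Chain'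
            rw [List.isChain_append]
            refine ⟨hch, List.isChain_singleton w, ?_⟩
            intro x hx y hy
            simp at hy
            rw [getLast?_eq_nthv v hne] at hx
            simp at hx
            rw [hz, hk, hn] at hadj
            rw [← hy, ← hx]
            exact hadj
          · rw [nthv_append v p w (by omega)]
            exact hhd
          · intro i hi
            simp at hi
            rcases Nat.lt_or_ge (i+1) n with h | h
            · have h1 : nthv v (p ++ [w]) i = nthv v p i := nthv_append v p w (by omega)
              have h2 : nthv v (p ++ [w]) (i+1) = nthv v p (i+1) := nthv_append v p w h
              rw [edg, h1, h2, ← edg]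
              exact HM i h
            · have hik : i = k := by omega
              have h1 : nthv v (p ++ [w]) i = z := by
                rw [hik, nthv_append v p w (by omega), ← hz]
              have h2 : nthv v (p ++ [w]) (i+1) = w := by
                rw [show i + 1 = p.length by omega]
                exact nthv_append_last v p w
              rw [edg, h1, h2, hsw]
              simp [heM, hik, hkp]
          · intro i hi
            simp at hi
            rcases Nat.lt_or_ge (i+1) n with h | h
            · have h1 : nthv v (p ++ [w]) i = nthv v p i := nthv_append v p w (by omega)
              have h2 : nthv v (p ++ [w]) (i+1) = nthv v p (i+1) := nthv_append v p w h
              rw [edg, h1, h2, ← edg]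
              exact HN i h
            · have hik : i = k := by omega
              have h1 : nthv v (p ++ [w]) i = z := by
                rw [hik, nthv_append v p w (by omega), ← hz]
              have h2 : nthv v (p ++ [w]) (i+1) = w := by
                rw [show i + 1 = p.length by omega]
                exact nthv_append_last v p w
              rw [edg, h1, h2, hsw]
              simp [heN, hik, hkp]
        · -- done: even stop
          exact ⟨p, hne, hnd, hch, hhd, HM, HN, hkp, hzM⟩
      · -- k odd
        have hkp1 : k % 2 = 1 := by omega
        by_cases hzN : CoveredBy N z
        · -- extend with the N-partner of z
          obtain ⟨e, heN, hze⟩ := hzN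
          set w := Sym2.Mem.other hze with hw
          have hsw : s(z, w) = e := Sym2.other_spec hze
          have hadj : G.Adj z w := (SimpleGraph.mem_edgeSet G).mp (hsw ▸ hN.1 heN)
          have hzw : z ≠ w := hadj.ne
          have hwe : w ∈ e := hsw ▸ Sym2.mem_iff.mpr (Or.inr rfl)
          have hwp : ∀ j, j < n → nthv v p j ≠ w := by
            intro j hj heq
            rcases Nat.lt_or_ge j k with hjk | hjk
            · obtain ⟨i, hi1, hi2, hfe, -⟩ :=
                keyN hN v hnd HN hHhead j (by omega) (Or.inr (by omega)) e heN (heq ▸ hwe)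
              have hzi : z = nthv v p i ∨ z = nthv v p (i+1) :=
                (mem_edg_iff v p i).mp (hfe ▸ hze)
              rcases hzi with h | h
              · have := nthv_inj v hnd (by omega) (by omega) h
                omega
              · have := nthv_inj v hnd (by omega) (by omega) h
                omega
            · have hjk' : j = k := by omega
              exact hzw ((hjk' ▸ heq).symm ▸ rfl)
          have heM : e ∉ M := by
            intro heM
            obtain ⟨i, hi1, hi2, hfe, hki⟩ :=
              keyM hM v hnd HM k (by omega) (Or.inl hkp1) e heM hze
            rcases hki with h | h
            · omega
            · have : w = nthv v p i ∨ w = nthv v p (i+1) :=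
                (mem_edg_iff v p i).mp (hfe ▸ hwe)
              rcases this with h2 | h2
              · exact hwp i (by omega) h2.symm
              · exact hzw (by rw [h2, ← h, ← hz])
          refine ih (p ++ [w]) (by simp) ?_ ?_ ?_ ?_ ?_ (by simp; omega)
          · rw [List.nodup_append]
            refine ⟨hnd, by simp, ?_⟩
            intro a ha b hb' hab
            simp at hb'
            have hb : a = w := hab.trans hb'
            obtain ⟨⟨j, hj⟩, hja⟩ := List.mem_iff_get.mp ha
            exact hwp j hj (by rw [nthv_eq_get v hj, hja, hb])
          · unfold List.Chain'
            rw [List.isChain_append]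
            refine ⟨hch, List.isChain_singleton w, ?_⟩
            intro x hx y hy
            simp at hy
            rw [getLast?_eq_nthv v hne] at hx
            simp at hx
            rw [hz, hk, hn] at hadj
            rw [← hy, ← hx]
            exact hadj
          · rw [nthv_append v p w (by omega)]
            exact hhd
          · intro i hi
            simp at hi
            rcases Nat.lt_or_ge (i+1) n with h | h
            · have h1 : nthv v (p ++ [w]) i = nthv v p i := nthv_append v p w (by omega)
              have h2 : nthv v (p ++ [w]) (i+1) = nthv v p (i+1) := nthv_append v p w h
              rw [edg, h1, h2, ← edg]
              exact HM i h
            · have hik : i = k := by omega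
              have h1 : nthv v (p ++ [w]) i = z := by
                rw [hik, nthv_append v p w (by omega), ← hz]
              have h2 : nthv v (p ++ [w]) (i+1) = w := by
                rw [show i + 1 = p.length by omega]
                exact nthv_append_last v p w
              rw [edg, h1, h2, hsw]
              simp [heM, hik, hkp1]
          · intro i hi
            simp at hi
            rcases Nat.lt_or_ge (i+1) n with h | h
            · have h1 : nthv v (p ++ [w]) i = nthv v p i := nthv_append v p w (by omega)
              have h2 : nthv v (p ++ [w]) (i+1) = nthv v p (i+1) := nthv_append v p w h
              rw [edg, h1, h2, ← edg]
              exact HN i h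
            · have hik : i = k := by omega
              have h1 : nthv v (p ++ [w]) i = z := by
                rw [hik, nthv_append v p w (by omega), ← hz]
              have h2 : nthv v (p ++ [w]) (i+1) = w := by
                rw [show i + 1 = p.length by omega]
                exact nthv_append_last v p w
              rw [edg, h1, h2, hsw]
              simp [heN, hik, hkp1]
        · -- odd stop: contradiction with maximality of N
          exfalso
          obtain ⟨N', hN'm, hN'c, -⟩ :=
            swap_lemma hN v hne hnd hch HN hHhead (fun _ => hzN)
          have := hNmax N' hN'm
          omega
  exact main (Fintype.card V + 1) [v] (by simp) (by simp) (List.isChain_singleton v) rfl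
    (by intro i hi; simp at hi) (by intro i hi; simp at hi)
    (by simp only [List.length_singleton]; omega)

end Stmt16Aux

/-- Characterization of `𝔐(G)` via alternating paths: a vertex is covered
by every maximum matching iff it is not reachable by an `M`-alternating path from an
`M`-uncovered vertex of its own side, for any fixed maximum matching `M`. -/
theorem stmt_16 {V : Type*} [Fintype V] (G : SimpleGraph V) (X Y : Set V)
    (hB : IsBipartition G X Y) (M : Set (Sym2 V)) (hM : IsMaxMatching G M) (v : V) :
    CoveredByAllMax G v ↔
      ¬ ((v ∈ X ∧ ∃ u ∈ X, ¬ CoveredBy M u ∧ AltPathFrom G M u v) ∨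
         (v ∈ Y ∧ ∃ u ∈ Y, ¬ CoveredBy M u ∧ AltPathFrom G M u v)) := by
  classical
  open Stmt16Aux in
  constructor
  · -- covered by all max matchings → no alternating path from an uncovered same-side vertex
    intro hCov hdisj
    have core : ∀ u : V, ¬ CoveredBy M u → AltPathFrom G M u v →
        ((u ∈ X ∧ v ∈ X) ∨ (u ∈ Y ∧ v ∈ Y)) → False := by
      rintro u huM ⟨p, hne, hnd, hch, hh, hl, hedge⟩ hside
      have hn1 : 1 ≤ p.length := List.length_pos_iff.mpr hne
      have hu : nthv v p 0 = u := by
        have h2 := head?_eq_nthv v hne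
        rw [hh] at h2
        exact (Option.some.inj h2).symm
      have hv : nthv v p (p.length - 1) = v := by
        have h2 := getLast?_eq_nthv v hne
        rw [hl] at h2
        exact (Option.some.inj h2).symm
      have Hedge' : ∀ i, i + 1 < p.length → (edg v p i ∈ M ↔ i % 2 = 1) := by
        intro i h
        have h2 := hedge i h
        rwa [edg, nthv_eq_get v (by omega), nthv_eq_get v h]
      have hsp := side_parity hB v hch (p.length - 1) (by omega)
      rw [hu, hv] at hsp
      have hk0 : (p.length - 1) % 2 = 0 := by
        rcases hside with ⟨huX, hvX⟩ | ⟨huY, hvY⟩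
        · tauto
        · have h1 : u ∉ X := fun h => Set.disjoint_left.1 hB.2.1 h huY
          have h2 : v ∉ X := fun h => Set.disjoint_left.1 hB.2.1 h hvY
          tauto
      obtain ⟨M', hM'm, hM'c, hM'l⟩ := swap_lemma hM.1 v hne hnd hch Hedge'
        (by rw [hu]; exact huM) (fun h1 => absurd h1 (by omega))
      have hcard : M'.ncard = M.ncard := by omega
      have hmax : IsMaxMatching G M' := ⟨hM'm, fun P hP => hcard ▸ hM.2 P hP⟩
      exact (hv ▸ hM'l hk0) (hCov M' hmax)
    rcases hdisj with ⟨hvX, u, huX, huM, hpath⟩ | ⟨hvY, u, huY, huM, hpath⟩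
    · exact core u huM hpath (Or.inl ⟨huX, hvX⟩)
    · exact core u huM hpath (Or.inr ⟨huY, hvY⟩)
  · -- no such alternating path → covered by all max matchings
    intro h
    by_contra hc
    have hex : ∃ N, IsMaxMatching G N ∧ ¬ CoveredBy N v := by
      unfold CoveredByAllMax at hc
      push_neg at hc
      exact hc
    obtain ⟨N, hNm, hvN⟩ := hex
    obtain ⟨p, hne, hnd, hch, hhd, HM, HN, hk0, huM⟩ :=
      build_path hM.1 hNm.1 hNm.2 hvN
    have hn1 : 1 ≤ p.length := List.length_pos_iff.mpr hne
    have halt : AltPathFrom G M (nthv v p (p.length - 1)) v := by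
      refine ⟨p.reverse, by simpa using hne, by simpa using hnd, ?_, ?_, ?_, ?_⟩
      · unfold List.Chain'
        rw [List.isChain_reverse]
        exact hch.imp (fun a b hab => hab.symm)
      · rw [List.head?_reverse, getLast?_eq_nthv v hne]
      · rw [List.getLast?_reverse, head?_eq_nthv v hne, hhd]
      · intro i hi
        have hlen : p.reverse.length = p.length := List.length_reverse
        have hi' : i + 1 < p.length := by rwa [hlen] at hi
        have e1 : p.reverse.get ⟨i, Nat.lt_of_succ_lt hi⟩
            = nthv v p (p.length - 1 - i) :=
          (nthv_eq_get v (show i < p.reverse.length by omega)).symm.trans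
            (nthv_reverse v p (by omega))
        have e2 : p.reverse.get ⟨i+1, hi⟩ = nthv v p (p.length - 1 - (i+1)) :=
          (nthv_eq_get v (show i + 1 < p.reverse.length by omega)).symm.trans
            (nthv_reverse v p (by omega))
        rw [e1, e2, show p.length - 1 - i = (p.length - 2 - i) + 1 from by omega,
          show p.length - 1 - (i+1) = p.length - 2 - i from by omega, Sym2.eq_swap,
          show s(nthv v p (p.length - 2 - i), nthv v p ((p.length - 2 - i) + 1))
            = edg v p (p.length - 2 - i) from rfl,
          HM (p.length - 2 - i) (by omega)]
        omega
    have hsp := side_parity hB v hch (p.length - 1) (by omega)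
    rw [hhd] at hsp
    have hvXY : v ∈ X ∪ Y := by rw [hB.1]; trivial
    rcases hvXY with hvX | hvY
    · exact h (Or.inl ⟨hvX, nthv v p (p.length - 1), by tauto, huM, halt⟩)
    · have hvnX : v ∉ X := fun h2 => Set.disjoint_left.1 hB.2.1 h2 hvY
      have hunX : nthv v p (p.length - 1) ∉ X := by tauto
      have huXY : nthv v p (p.length - 1) ∈ X ∪ Y := by rw [hB.1]; trivial
      have huY : nthv v p (p.length - 1) ∈ Y := by
        rcases huXY with h2 | h2
        · exact absurd h2 hunX
        · exact h2
      exact h (Or.inr ⟨hvY, nthv v p (p.length - 1), huY, huM, halt⟩)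
end

section
/- Let G be a finite bipartite graph with bipartition (X, Y) and let ℓ be a nonnegative integer. If |𝔅_ℓ(G)| > ℓ² + ℓ, then G contains a matching of size ℓ + 1. -/
/-- If the Buss selector `𝔅_ℓ(G)` (vertices of `X` that are `ℓ`-important
or have an `ℓ`-unimportant neighbour) has more than `ℓ² + ℓ` elements, then `G` contains
a matching of size `ℓ + 1`. -/
theorem stmt_17 {V : Type*} [Fintype V] (G : SimpleGraph V) (X Y : Set V)
    (hB : IsBipartition G X Y) (ℓ : ℕ)
    (h : ℓ ^ 2 + ℓ <
      {v : V | v ∈ X ∧ (ℓ < (G.neighborSet v).ncard ∨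
        ∃ u ∈ G.neighborSet v, (G.neighborSet u).ncard ≤ ℓ)}.ncard) :
    ∃ M : Set (Sym2 V), IsMatching G M ∧ M.ncard = ℓ + 1 := by
  classical
  by_contra hcon
  push_neg at hcon
  obtain ⟨hXY, hdisj, hbip⟩ := hB
  set B := {v : V | v ∈ X ∧ (ℓ < (G.neighborSet v).ncard ∨
      ∃ u ∈ G.neighborSet v, (G.neighborSet u).ncard ≤ ℓ)} with hBdef
  -- subsets of matchings are matchings
  have hsub : ∀ M N : Set (Sym2 V), N ⊆ M → IsMatching G M → IsMatching G N := by
    rintro M N hNM ⟨h1, h2⟩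
    exact ⟨hNM.trans h1, fun e he f hf => h2 e (hNM he) f (hNM hf)⟩
  -- a maximum matching
  obtain ⟨M, hM, hmax⟩ : ∃ M, IsMatching G M ∧ ∀ N, IsMatching G N → N.ncard ≤ M.ncard := by
    obtain ⟨M, hM, hm⟩ := Set.Finite.exists_maximalFor Set.ncard
      {M : Set (Sym2 V) | IsMatching G M} (Set.toFinite _)
      ⟨∅, by simp [IsMatching]⟩
    refine ⟨M, hM, fun N hN => ?_⟩
    rcases le_total N.ncard M.ncard with hle | hle
    · exact hle
    · exact (hm (j := N) hN hle).ge
  -- maximum matching has size at most ℓ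
  have hMle : M.ncard ≤ ℓ := by
    by_contra hle
    push_neg at hle
    obtain ⟨N, hNM, hN⟩ := Set.exists_subset_card_eq (s := M) (n := ℓ + 1) hle
    exact (hcon N (hsub M N hNM hM)) hN
  -- edges of M have one endpoint in X and one in Y
  have hedge : ∀ e ∈ M, ∃ a b, a ∈ X ∧ b ∈ Y ∧ G.Adj a b ∧ e = s(a, b) := by
    intro e he
    induction e using Sym2.inductionOn with
    | hf a b =>
      have hadj : G.Adj a b := (SimpleGraph.mem_edgeSet G).mp (hM.1 he)
      rcases hbip a b hadj with ⟨ha, hb⟩ | ⟨ha, hb⟩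
      · exact ⟨a, b, ha, hb, hadj, rfl⟩
      · exact ⟨b, a, hb, ha, hadj.symm, Sym2.eq_swap⟩
  -- the function choosing a covering edge
  have hcovedge : ∀ v, CoveredBy M v → ∃ e, e ∈ M ∧ v ∈ e := fun v hv => hv
  set f : V → Sym2 V := fun v => if h : CoveredBy M v then h.choose else s(v, v) with hf
  have hfmem : ∀ v, CoveredBy M v → f v ∈ M ∧ v ∈ f v := by
    intro v hv
    simp only [hf, dif_pos hv]
    exact ⟨hv.choose_spec.1, hv.choose_spec.2⟩
  -- covered Y vertices
  set Yend := {y | y ∈ Y ∧ CoveredBy M y} with hYend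
  have hYcard : Yend.ncard ≤ M.ncard := by
    apply Set.ncard_le_ncard_of_injOn f
    · intro y hy; exact (hfmem y hy.2).1
    · intro y1 h1 y2 h2 heq
      obtain ⟨a, b, haX, hbY, hadj, her⟩ := hedge (f y1) (hfmem y1 h1.2).1
      have hm1 : y1 ∈ f y1 := (hfmem y1 h1.2).2
      have hm2 : y2 ∈ f y1 := heq ▸ (hfmem y2 h2.2).2
      rw [her, Sym2.mem_iff] at hm1 hm2
      have hy1 : y1 = b := by
        rcases hm1 with rfl | rfl
        · exact absurd haX (Set.disjoint_right.mp hdisj h1.1)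
        · rfl
      have hy2 : y2 = b := by
        rcases hm2 with rfl | rfl
        · exact absurd haX (Set.disjoint_right.mp hdisj h2.1)
        · rfl
      rw [hy1, hy2]
  -- covered X vertices
  set Xend := {x | x ∈ X ∧ CoveredBy M x} with hXend
  have hXcard : Xend.ncard ≤ M.ncard := by
    apply Set.ncard_le_ncard_of_injOn f
    · intro y hy; exact (hfmem y hy.2).1
    · intro y1 h1 y2 h2 heq
      obtain ⟨a, b, haX, hbY, hadj, her⟩ := hedge (f y1) (hfmem y1 h1.2).1
      have hm1 : y1 ∈ f y1 := (hfmem y1 h1.2).2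
      have hm2 : y2 ∈ f y1 := heq ▸ (hfmem y2 h2.2).2
      rw [her, Sym2.mem_iff] at hm1 hm2
      have hy1 : y1 = a := by
        rcases hm1 with rfl | rfl
        · rfl
        · exact absurd hbY (Set.disjoint_left.mp hdisj h1.1)
      have hy2 : y2 = a := by
        rcases hm2 with rfl | rfl
        · rfl
        · exact absurd hbY (Set.disjoint_left.mp hdisj h2.1)
      rw [hy1, hy2]
  -- no edge between two uncovered vertices (maximality)
  have hmaximal : ∀ v u, G.Adj v u → ¬ CoveredBy M v → ¬ CoveredBy M u → False := by
    intro v u hadj hv hu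
    have hne : s(v, u) ∉ M := fun hmem => hv ⟨_, hmem, Sym2.mem_mk_left v u⟩
    have hmatch : IsMatching G (insert s(v, u) M) := by
      constructor
      · intro e he
        rcases he with rfl | he
        · exact (SimpleGraph.mem_edgeSet G).mpr hadj
        · exact hM.1 he
      · intro e he g hg hef w hwe hwf
        rcases he with rfl | he <;> rcases hg with rfl | hg
        · exact hef rfl
        · rw [Sym2.mem_iff] at hwe
          rcases hwe with rfl | rfl
          · exact hv ⟨g, hg, hwf⟩
          · exact hu ⟨g, hg, hwf⟩
        · rw [Sym2.mem_iff] at hwf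
          rcases hwf with rfl | rfl
          · exact hv ⟨e, he, hwe⟩
          · exact hu ⟨e, he, hwe⟩
        · exact hM.2 e he g hg hef w hwe hwf
    have hcard := hmax _ hmatch
    rw [Set.ncard_insert_of_notMem hne (Set.toFinite M)] at hcard
    omega
  -- neighborhoods of uncovered B vertices lie in Yend
  have hNsub : ∀ v ∈ X, ¬ CoveredBy M v → G.neighborSet v ⊆ Yend := by
    intro v hv hvc u hu
    have hadj : G.Adj v u := hu
    have huY : u ∈ Y := by
      rcases hbip v u hadj with ⟨_, huY⟩ | ⟨hvY, _⟩
      · exact huY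
      · exact absurd hvY (Set.disjoint_left.mp hdisj hv)
    refine ⟨huY, ?_⟩
    by_contra huc
    exact hmaximal v u hadj hvc huc
  -- uncovered B vertices lie in the union of small neighborhoods
  set Yun := {u | u ∈ Yend ∧ (G.neighborSet u).ncard ≤ ℓ} with hYun
  have hBuncov : B \ {v | CoveredBy M v} ⊆ ⋃ u ∈ Yun, G.neighborSet u := by
    rintro v ⟨⟨hvX, hvdeg⟩, hvnc⟩
    have hvnc' : ¬ CoveredBy M v := hvnc
    have hNv : G.neighborSet v ⊆ Yend := hNsub v hvX hvnc'
    have hdegle : (G.neighborSet v).ncard ≤ ℓ :=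
      le_trans (le_trans (Set.ncard_le_ncard hNv (Set.toFinite _)) hYcard) hMle
    rcases hvdeg with hlt | ⟨u, huN, hudeg⟩
    · omega
    · have huYend : u ∈ Yend := hNv huN
      refine Set.mem_biUnion (show u ∈ Yun from ⟨huYend, hudeg⟩) ?_
      exact (SimpleGraph.mem_neighborSet _ _ _).mpr ((SimpleGraph.mem_neighborSet _ _ _).mp huN).symm
  -- counting the union
  have hUnion : ∀ s : Set V, s.Finite → (∀ u ∈ s, (G.neighborSet u).ncard ≤ ℓ) →
      (⋃ u ∈ s, G.neighborSet u).ncard ≤ s.ncard * ℓ := by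
    intro s hs
    refine Set.Finite.induction_on
      (motive := fun s _ => (∀ u ∈ s, (G.neighborSet u).ncard ≤ ℓ) →
        (⋃ u ∈ s, G.neighborSet u).ncard ≤ s.ncard * ℓ) s hs (by simp) ?_
    intro a s ha hsf ih hdeg
    · have h1 : (⋃ u ∈ insert a s, G.neighborSet u) =
          G.neighborSet a ∪ ⋃ u ∈ s, G.neighborSet u := by
        simp [Set.biUnion_insert]
      rw [h1, Set.ncard_insert_of_notMem ha hsf]
      calc (G.neighborSet a ∪ ⋃ u ∈ s, G.neighborSet u).ncard
          ≤ (G.neighborSet a).ncard + (⋃ u ∈ s, G.neighborSet u).ncard :=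
            Set.ncard_union_le _ _
        _ ≤ ℓ + s.ncard * ℓ := by
            gcongr
            · exact hdeg a (Set.mem_insert a s)
            · exact ih (fun u hu => hdeg u (Set.mem_insert_of_mem a hu))
        _ = (s.ncard + 1) * ℓ := by ring
  have hYunle : Yun.ncard ≤ ℓ :=
    le_trans (le_trans (Set.ncard_le_ncard (fun u hu => hu.1) (Set.toFinite _)) hYcard) hMle
  have hUle : (⋃ u ∈ Yun, G.neighborSet u).ncard ≤ ℓ * ℓ := by
    calc (⋃ u ∈ Yun, G.neighborSet u).ncard ≤ Yun.ncard * ℓ :=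
          hUnion Yun (Set.toFinite _) (fun u hu => hu.2)
      _ ≤ ℓ * ℓ := Nat.mul_le_mul_right ℓ hYunle
  -- final count
  have hBsplit : B ⊆ (B ∩ {v | CoveredBy M v}) ∪ (B \ {v | CoveredBy M v}) := by
    intro v hv
    by_cases hc : CoveredBy M v
    · exact Or.inl ⟨hv, hc⟩
    · exact Or.inr ⟨hv, hc⟩
  have hc1 : (B ∩ {v | CoveredBy M v}).ncard ≤ ℓ := by
    refine le_trans (le_trans ?_ hXcard) hMle
    exact Set.ncard_le_ncard (fun v hv => ⟨hv.1.1, hv.2⟩) (Set.toFinite _)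
  have hc2 : (B \ {v | CoveredBy M v}).ncard ≤ ℓ * ℓ :=
    le_trans (Set.ncard_le_ncard hBuncov (Set.toFinite _)) hUle
  have : B.ncard ≤ ℓ + ℓ * ℓ :=
    le_trans (le_trans (Set.ncard_le_ncard hBsplit (Set.toFinite _))
      (Set.ncard_union_le _ _)) (by omega)
  have hsq : ℓ ^ 2 = ℓ * ℓ := sq ℓ
  omega
end

section
/- Let T be a semi-complete digraph and k a nonnegative integer. If T contains a (520k+2, 20k)-degree tangle or a (20k+1, 20k)-matching tangle, then every simple digraph H with |V(H)| + |E(H)| ≤ k is topologically contained in T. -/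
/-! ### Auxiliary machinery for stmt_18 -/

section Stmt18Aux
open Finset

open scoped Classical

set_option linter.unusedSectionVars false

variable {V : Type*} [Fintype V]

/-- Outdegree as a Finset cardinality. -/
private noncomputable def degF (E : V → V → Prop) (v : V) : ℕ :=
  (Finset.univ.filter (fun w => E v w)).card

private lemma outdeg_eq_degF (E : V → V → Prop) (v : V) : outdeg E v = degF E v := by
  unfold outdeg degF
  rw [← Set.ncard_coe_finset]
  congr 1
  ext w
  simp

/-- In any semicomplete digraph, some vertex of a finite set beats at least
(|Q|-1)/2 members of the set. -/
private lemma exists_dominant {E : V → V → Prop} (hT : SemiComplete E)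
    (Q : Finset V) (hQ : Q.Nonempty) :
    ∃ q ∈ Q, Q.card ≤ 2 * (Q.filter (fun z => E q z)).card + 1 := by
  by_contra hcon
  push_neg at hcon
  set T : Finset (V × V) := (Q ×ˢ Q).filter (fun p => E p.1 p.2) with hT_def
  have hTfst : ∀ p ∈ T, p.1 ∈ Q := by
    intro p hp
    exact (Finset.mem_product.1 (Finset.mem_filter.1 hp).1).1
  have hfib : ∀ q ∈ Q, (T.filter fun p => p.1 = q).card
      = (Q.filter (fun z => E q z)).card := by
    intro q hq
    apply Finset.card_bij (fun p _ => p.2)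
    · intro p hp
      simp only [Finset.mem_filter] at hp ⊢
      obtain ⟨hpT, hp1⟩ := hp
      obtain ⟨hprod, hE⟩ := Finset.mem_filter.1 hpT
      exact ⟨(Finset.mem_product.1 hprod).2, hp1 ▸ hE⟩
    · intro p hp p' hp' hsnd
      obtain ⟨-, hp1⟩ := Finset.mem_filter.1 hp
      obtain ⟨-, hp1'⟩ := Finset.mem_filter.1 hp'
      exact Prod.ext (hp1.trans hp1'.symm) hsnd
    · intro z hz
      obtain ⟨hzQ, hE⟩ := Finset.mem_filter.1 hz
      refine ⟨(q, z), ?_, rfl⟩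
      exact Finset.mem_filter.2 ⟨Finset.mem_filter.2
        ⟨Finset.mem_product.2 ⟨hq, hzQ⟩, hE⟩, rfl⟩
  have hTcard : T.card = ∑ q ∈ Q, (Q.filter (fun z => E q z)).card := by
    rw [Finset.card_eq_sum_card_fiberwise hTfst]
    exact Finset.sum_congr rfl hfib
  -- offDiag is covered by T and its swap
  have hcover : Q.offDiag ⊆ T ∪ T.image Prod.swap := by
    intro p hp
    obtain ⟨h1, h2, hne⟩ := Finset.mem_offDiag.1 hp
    rcases hT.2 p.1 p.2 hne with hE | hE
    · exact Finset.mem_union_left _ (Finset.mem_filter.2 ⟨Finset.mem_product.2 ⟨h1, h2⟩, hE⟩)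
    · refine Finset.mem_union_right _ (Finset.mem_image.2 ⟨(p.2, p.1), ?_, rfl⟩)
      exact Finset.mem_filter.2 ⟨Finset.mem_product.2 ⟨h2, h1⟩, hE⟩
  have hoff : Q.card * Q.card - Q.card ≤ 2 * T.card := by
    calc Q.card * Q.card - Q.card = Q.offDiag.card := (Finset.offDiag_card Q).symm
    _ ≤ (T ∪ T.image Prod.swap).card := Finset.card_le_card hcover
    _ ≤ T.card + (T.image Prod.swap).card := Finset.card_union_le _ _
    _ ≤ T.card + T.card := by
        exact Nat.add_le_add_left (Finset.card_image_le) _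
    _ = 2 * T.card := by ring
  -- upper bound on T.card
  have hub : ∀ q ∈ Q, 2 * (Q.filter (fun z => E q z)).card + 2 ≤ Q.card := by
    intro q hq
    have := hcon q hq
    omega
  have hsum : ∑ q ∈ Q, (2 * (Q.filter (fun z => E q z)).card + 2) ≤ Q.card * Q.card :=
    Finset.sum_le_card_nsmul _ _ _ hub
  have hsum' : 2 * T.card + 2 * Q.card ≤ Q.card * Q.card := by
    have e1 : ∑ q ∈ Q, (2 * (Q.filter (fun z => E q z)).card + 2)
        = 2 * ∑ q ∈ Q, (Q.filter (fun z => E q z)).card + 2 * Q.card := by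
      rw [Finset.sum_add_distrib, ← Finset.mul_sum, Finset.sum_const, smul_eq_mul,
        mul_comm Q.card 2]
    rw [e1] at hsum
    rw [hTcard]
    exact hsum
  have hQ1 : 1 ≤ Q.card := Finset.card_pos.2 hQ
  set c := Q.card
  set t := T.card
  -- c*c - c ≤ 2t and 2t + 2c ≤ c*c, c ≥ 1: contradiction
  have : c * c - c ≤ 2 * t := hoff
  have h2 : 2 * t + 2 * c ≤ c * c := hsum'
  generalize hcc : c * c = d at this h2
  omega

/-- Counting length-2 middles downhill. -/
private lemma middles_card {E : V → V → Prop} (hT : SemiComplete E) {v w : V}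
    (hvw : v ≠ w) (hnE : ¬ E v w) :
    degF E v + 1 ≤ (Finset.univ.filter (fun z => E v z ∧ E z w)).card + degF E w := by
  have hwv : E w v := by
    rcases hT.2 v w hvw with h | h
    · exact absurd h hnE
    · exact h
  have hsub : Finset.univ.filter (fun z => E v z)
      ⊆ (Finset.univ.filter (fun z => E v z ∧ E z w))
        ∪ ((Finset.univ.filter (fun z => E w z)).erase v) := by
    intro z hz
    have hEvz : E v z := (Finset.mem_filter.1 hz).2
    have hzw : z ≠ w := fun h => hnE (h ▸ hEvz)
    have hzv : z ≠ v := fun h => hT.1 v (h ▸ hEvz)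
    by_cases hzw' : E z w
    · exact Finset.mem_union_left _ (Finset.mem_filter.2 ⟨Finset.mem_univ _, hEvz, hzw'⟩)
    · have : E w z := by
        rcases hT.2 z w hzw with h | h
        · exact absurd h hzw'
        · exact h
      exact Finset.mem_union_right _ (Finset.mem_erase.2
        ⟨hzv, Finset.mem_filter.2 ⟨Finset.mem_univ _, this⟩⟩)
  have hv_mem : v ∈ Finset.univ.filter (fun z => E w z) :=
    Finset.mem_filter.2 ⟨Finset.mem_univ _, hwv⟩
  have h1 : degF E v ≤ (Finset.univ.filter (fun z => E v z ∧ E z w)).card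
      + ((Finset.univ.filter (fun z => E w z)).card - 1) := by
    calc degF E v ≤ ((Finset.univ.filter (fun z => E v z ∧ E z w))
        ∪ ((Finset.univ.filter (fun z => E w z)).erase v)).card :=
          Finset.card_le_card hsub
    _ ≤ _ := by
        refine le_trans (Finset.card_union_le _ _) ?_
        rw [Finset.card_erase_of_mem hv_mem]
  have h2 : 1 ≤ degF E w := by
    have := Finset.card_pos.2 ⟨v, hv_mem⟩
    exact this
  unfold degF at *
  omega

/-- Reach sets: vertices reachable from `v` in at most `j` steps avoiding `F`. -/
private noncomputable def reachF (E : V → V → Prop) (F : Finset V) (v : V) : ℕ → Finset V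
  | 0 => {v}
  | j+1 => reachF E F v j ∪ Finset.univ.filter
      (fun z => z ∉ F ∧ ∃ r ∈ reachF E F v j, E r z)

private lemma reachF_subset_succ (E : V → V → Prop) (F : Finset V) (v : V) (j : ℕ) :
    reachF E F v j ⊆ reachF E F v (j+1) := by
  intro z hz
  exact Finset.mem_union_left _ hz

private lemma reachF_mono (E : V → V → Prop) (F : Finset V) (v : V) {i j : ℕ} (h : i ≤ j) :
    reachF E F v i ⊆ reachF E F v j := by
  induction j with
  | zero => simpa [Nat.le_zero.1 h]
  | succ j ih =>
    rcases Nat.lt_or_ge i (j+1) with h' | h'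
    · exact fun z hz => reachF_subset_succ E F v j (ih (Nat.lt_succ_iff.1 h') hz)
    · have : i = j + 1 := le_antisymm h h'
      subst this
      exact fun z hz => hz

private lemma mem_reachF_self (E : V → V → Prop) (F : Finset V) (v : V) (j : ℕ) :
    v ∈ reachF E F v j :=
  reachF_mono E F v (Nat.zero_le j) (by simp [reachF])

private lemma reachF_step {E : V → V → Prop} {F : Finset V} {v z y : V} {j : ℕ}
    (hz : z ∈ reachF E F v j) (hE : E z y) (hy : y ∉ F) : y ∈ reachF E F v (j+1) :=
  Finset.mem_union_right _ (Finset.mem_filter.2 ⟨Finset.mem_univ _, hy, z, hz, hE⟩)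

private lemma reachF_not_mem_F {E : V → V → Prop} {F : Finset V} {v : V} (hv : v ∉ F) :
    ∀ j, ∀ z ∈ reachF E F v j, z ∉ F := by
  intro j
  induction j with
  | zero => intro z hz; rw [reachF, Finset.mem_singleton] at hz; exact hz ▸ hv
  | succ j ih =>
    intro z hz
    rcases Finset.mem_union.1 hz with h | h
    · exact ih z h
    · exact ((Finset.mem_filter.1 h).2).1

private lemma reachF_one_card {E : V → V → Prop} (hT : SemiComplete E) (F : Finset V)
    (v : V) : 1 + degF E v ≤ (reachF E F v 1).card + F.card := by
  have hsub : {v} ∪ ((Finset.univ.filter (fun z => E v z)) \ F) ⊆ reachF E F v 1 := by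
    intro z hz
    rcases Finset.mem_union.1 hz with h | h
    · rw [Finset.mem_singleton] at h
      exact h ▸ mem_reachF_self E F v 1
    · obtain ⟨hz1, hz2⟩ := Finset.mem_sdiff.1 h
      exact reachF_step (mem_reachF_self E F v 0) (Finset.mem_filter.1 hz1).2 hz2
  have hdisj : Disjoint ({v} : Finset V) ((Finset.univ.filter (fun z => E v z)) \ F) := by
    rw [Finset.disjoint_left]
    intro z hz hz'
    rw [Finset.mem_singleton] at hz
    exact hT.1 v (hz ▸ (Finset.mem_filter.1 (Finset.mem_sdiff.1 hz').1).2)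
  have h1 : 1 + ((Finset.univ.filter (fun z => E v z)) \ F).card ≤ (reachF E F v 1).card := by
    calc 1 + _ = ({v} ∪ ((Finset.univ.filter (fun z => E v z)) \ F)).card := by
          rw [Finset.card_union_of_disjoint hdisj, Finset.card_singleton]
    _ ≤ _ := Finset.card_le_card hsub
  have h2 : degF E v ≤ ((Finset.univ.filter (fun z => E v z)) \ F).card + F.card :=
    Finset.card_le_card_sdiff_add_card
  unfold degF at h2 ⊢
  omega

/-- Extraction of simple paths from reach sets. -/
private lemma reachF_path {E : V → V → Prop} (F : Finset V) (v : V) :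
    ∀ j, ∀ z ∈ reachF E F v j, ∃ p : List V, p.Nodup ∧ p.Chain' E ∧
      p.head? = some v ∧ p.getLast? = some z ∧ p.length ≤ j + 1 ∧
      ∀ x ∈ p, x ∈ reachF E F v j := by
  intro j
  induction j with
  | zero =>
    intro z hz
    rw [reachF, Finset.mem_singleton] at hz
    subst hz
    exact ⟨[z], by simp, by simp [List.Chain'], rfl, rfl, by simp, by simp [reachF]⟩
  | succ j ih =>
    intro z hz
    by_cases hzj : z ∈ reachF E F v j
    · obtain ⟨p, h1, h2, h3, h4, h5, h6⟩ := ih z hzj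
      exact ⟨p, h1, h2, h3, h4, Nat.le_succ_of_le h5,
        fun x hx => reachF_subset_succ E F v j (h6 x hx)⟩
    · rcases Finset.mem_union.1 hz with h | h
      · exact absurd h hzj
      · obtain ⟨hzF, r, hr, hE⟩ := (Finset.mem_filter.1 h).2
        obtain ⟨p, hnd, hch, hhead, hlast, hlen, hmem⟩ := ih r hr
        have hpne : p ≠ [] := by
          intro hc; rw [hc] at hhead; simp at hhead
        have hzp : z ∉ p := fun hzp => hzj (hmem z hzp)
        refine ⟨p ++ [z], ?_, ?_, ?_, ?_, ?_, ?_⟩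
        · rw [List.nodup_append]
          exact ⟨hnd, by simp, by simpa using fun a ha (h : a = z) => hzp (h ▸ ha)⟩
        · unfold List.Chain'
          rw [List.isChain_append]
          refine ⟨hch, by simp, ?_⟩
          intro x hx y hy
          rw [hlast] at hx
          have hx' : r = x := by simpa using hx
          have hy' : z = y := by simpa using hy
          rw [← hx', ← hy']
          exact hE
        · rcases p with _ | ⟨a, t⟩
          · exact absurd rfl hpne
          · simpa using hhead
        · rw [List.getLast?_concat]
        · simpa using Nat.add_le_add_right hlen 1
        · intro x hx
          rcases List.mem_append.1 hx with h' | h'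
          · exact reachF_subset_succ E F v j (hmem x h')
          · rw [List.mem_singleton] at h'
            exact h' ▸ hz

private lemma internals_mem {p : List V} {z : V} (hz : z ∈ internals p) : z ∈ p := by
  unfold internals at hz
  exact List.drop_subset 1 p (List.dropLast_subset _ hz)

private lemma internals_length (p : List V) : (internals p).length = p.length - 2 := by
  simp [internals]
  omega

private lemma internals_ne_head {p : List V} (hnd : p.Nodup) {v : V}
    (hv : p.head? = some v) {z : V} (hz : z ∈ internals p) : z ≠ v := by
  rcases p with _ | ⟨a, t⟩
  · simp at hv
  · have ha : a = v := by simpa using hv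
    subst ha
    have hzt : z ∈ t := List.dropLast_subset _ (by simpa [internals] using hz)
    intro h
    subst h
    exact (List.nodup_cons.1 hnd).1 hzt

private lemma internals_ne_last {p : List V} (hnd : p.Nodup) {w : V}
    (hw : p.getLast? = some w) {z : V} (hz : z ∈ internals p) : z ≠ w := by
  have hpne : p ≠ [] := by
    intro hc; rw [hc] at hw; simp at hw
  have hp : p = p.dropLast ++ [p.getLast hpne] := (List.dropLast_append_getLast hpne).symm
  have hwlast : p.getLast hpne = w := by
    rw [List.getLast?_eq_getLast hpne] at hw
    simpa using hw
  intro hzw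
  subst hzw
  -- z ∈ internals p ⊆ p.dropLast minus head; show z ∉ [getLast]
  have hz' : z ∈ p.dropLast := by
    unfold internals at hz
    rcases p with _ | ⟨a, t⟩
    · exact absurd rfl hpne
    · simp only [List.drop_succ_cons, List.drop_zero] at hz
      rcases t.eq_nil_or_concat with rfl | ⟨q, b, rfl⟩
      · simp at hz
      · simp only [List.concat_eq_append] at hz ⊢
        have : (a :: (q ++ [b])).dropLast = a :: q := by
          rw [← List.cons_append, List.dropLast_concat]
        rw [this]
        rw [List.dropLast_concat] at hz
        exact List.mem_cons_of_mem a hz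
  have hnd' := hp ▸ hnd
  have := List.disjoint_of_nodup_append hnd'
  have hinl : z ∈ p.dropLast := hz'
  have : z ∉ [p.getLast hpne] := this hinl
  rw [hwlast] at this
  simp at this

private lemma pathFrom_of_parts {E : V → V → Prop} {p : List V} {v w : V}
    (hne : p ≠ []) (hnd : p.Nodup) (hch : p.Chain' E)
    (hh : p.head? = some v) (hl : p.getLast? = some w) : PathFrom E v w p :=
  ⟨⟨hne, hnd, hch⟩, hh, hl⟩

/-- The robust-connectivity property we extract from either tangle. -/
private def GoodS (E : V → V → Prop) (k : ℕ) (S : Finset V) : Prop :=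
  ∀ v ∈ S, ∀ w ∈ S, v ≠ w → ∀ F : Finset V, F.card ≤ 3*k → v ∉ F → w ∉ F →
    ∃ p : List V, PathFrom E v w p ∧ p.length ≤ 5 ∧ ∀ z ∈ internals p, z ∉ F

private lemma caseA {E : V → V → Prop} (hT : SemiComplete E) {k : ℕ}
    {X : Set V} (hX : DegreeTangle E (520*k+2) (20*k) X) :
    ∃ S : Finset V, k ≤ S.card ∧ GoodS E k S := by
  classical
  obtain ⟨hXc, htang⟩ := hX
  obtain ⟨X₁, hX₁s, hX₁c⟩ := Set.exists_subset_card_eq hXc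
  set X₀ : Finset V := (Set.toFinite X₁).toFinset with hX₀
  have hX₀mem : ∀ {x}, x ∈ X₀ ↔ x ∈ X₁ := fun {x} => Set.Finite.mem_toFinset _
  have hX₀card : X₀.card = 520*k+2 := by
    rw [← Set.ncard_eq_toFinset_card X₁ (Set.toFinite X₁)]
    exact hX₁c
  have htangle : ∀ v ∈ X₀, ∀ w ∈ X₀, degF E v ≤ degF E w + 20*k := by
    intro v hv w hw
    have := htang v (hX₁s (hX₀mem.1 hv)) w (hX₁s (hX₀mem.1 hw))
    rwa [outdeg_eq_degF, outdeg_eq_degF] at this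
  -- Key: reach-3 sets capture most of X₀
  have key1 : ∀ v ∈ X₀, ∀ F : Finset V, F.card ≤ 3*k → v ∉ F →
      471*k + 2 ≤ (X₀ ∩ reachF E F v 3).card := by
    intro v hv F hFc hvF
    set R2 := reachF E F v 2 with hR2
    set R3 := reachF E F v 3 with hR3
    set Z' := X₀ \ (R3 ∪ F) with hZ'
    have hZ'beats : ∀ y ∈ Z', ∀ z ∈ R2, E y z := by
      intro y hy z hz
      obtain ⟨hyX, hyn⟩ := Finset.mem_sdiff.1 hy
      rw [Finset.mem_union] at hyn
      push_neg at hyn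
      have hyz : z ≠ y := by
        intro h
        exact hyn.1 (h ▸ reachF_mono E F v (by norm_num) hz)
      have hnE : ¬ E z y := fun hE => hyn.1 (reachF_step hz hE hyn.2)
      rcases hT.2 z y hyz with h | h
      · exact absurd h hnE
      · exact h
    have hZ'small : Z'.card ≤ 46*k - 1 := by
      rcases Z'.eq_empty_or_nonempty with he | hne
      · simp [he]
      obtain ⟨q, hqZ, hq⟩ := exists_dominant hT Z' hne
      have hqX : q ∈ X₀ := (Finset.mem_sdiff.1 hqZ).1
      have hdisj : Disjoint R2 (Z'.filter (fun z => E q z)) := by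
        rw [Finset.disjoint_left]
        intro z hz hz'
        have h3 := (Finset.mem_sdiff.1 (Finset.mem_filter.1 hz').1).2
        rw [Finset.mem_union] at h3
        push_neg at h3
        exact h3.1 (reachF_mono E F v (by norm_num) hz)
      have hsub : R2 ∪ Z'.filter (fun z => E q z) ⊆ Finset.univ.filter (fun z => E q z) := by
        intro z hz
        rcases Finset.mem_union.1 hz with h | h
        · exact Finset.mem_filter.2 ⟨Finset.mem_univ _, hZ'beats q hqZ z h⟩
        · exact Finset.mem_filter.2 ⟨Finset.mem_univ _, (Finset.mem_filter.1 h).2⟩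
      have hdeg : R2.card + (Z'.filter (fun z => E q z)).card ≤ degF E q := by
        rw [← Finset.card_union_of_disjoint hdisj]
        exact Finset.card_le_card hsub
      have h1 : 1 + degF E v ≤ R2.card + F.card := by
        have hoc := reachF_one_card hT F v
        have hmono : (reachF E F v 1).card ≤ R2.card :=
          Finset.card_le_card (reachF_mono E F v (by norm_num))
        omega
      have h2 : degF E q ≤ degF E v + 20*k := htangle q hqX v hv
      omega
    have hcover : X₀ ⊆ (X₀ ∩ R3) ∪ (Z' ∪ F) := by
      intro x hx
      by_cases hxR : x ∈ R3
      · exact Finset.mem_union_left _ (Finset.mem_inter.2 ⟨hx, hxR⟩)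
      · by_cases hxF : x ∈ F
        · exact Finset.mem_union_right _ (Finset.mem_union_right _ hxF)
        · exact Finset.mem_union_right _ (Finset.mem_union_left _
            (Finset.mem_sdiff.2 ⟨hx, by simp [hxR, hxF]⟩))
    have hcc : X₀.card ≤ (X₀ ∩ R3).card + (Z'.card + F.card) :=
      le_trans (Finset.card_le_card hcover)
        (le_trans (Finset.card_union_le _ _)
          (Nat.add_le_add_left (Finset.card_union_le _ _) _))
    omega
  -- Bad targets
  set Bad : V → Prop := fun x => ∃ v ∈ X₀, ∃ F : Finset V,
    v ≠ x ∧ v ∉ F ∧ x ∉ F ∧ F.card ≤ 3*k ∧ x ∉ reachF E F v 4 with hBad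
  set Wb := X₀.filter Bad with hWb
  have hWbsub : Wb ⊆ X₀ := Finset.filter_subset _ _
  have trap : ∀ b ∈ Wb, ∃ B : Finset V, B ⊆ X₀ ∧ 471*k+2 ≤ B.card ∧ b ∉ B ∧
      (∀ a ∈ B, ¬ E a b ∧ E b a) := by
    intro b hb
    obtain ⟨hbX, v, hv, F, hne, hvF, hbF, hFc, hreach⟩ := Finset.mem_filter.1 hb
    refine ⟨X₀ ∩ reachF E F v 3, Finset.inter_subset_left, key1 v hv F hFc hvF, ?_, ?_⟩
    · intro hbB
      exact hreach (reachF_mono E F v (by norm_num) (Finset.mem_inter.1 hbB).2)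
    · intro a haB
      have hnE : ¬ E a b := fun hEab =>
        hreach (reachF_step (Finset.mem_inter.1 haB).2 hEab hbF)
      have hab : a ≠ b := by
        intro h
        exact hreach (reachF_mono E F v (by norm_num)
          (h ▸ (Finset.mem_inter.1 haB).2))
      refine ⟨hnE, ?_⟩
      rcases hT.2 a b hab with h | h
      · exact absurd h hnE
      · exact h
  have hWbcard : Wb.card ≤ 98*k := by
    have hlow : ∀ b ∈ Wb, Wb.card ≤ (Wb.filter (fun a => a ≠ b ∧ ¬ E a b)).card + 49*k := by
      intro b hb
      obtain ⟨B, hBsub, hBcard, hBnot, hBprop⟩ := trap b hb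
      have hsub : Wb ⊆ (Wb.filter (fun a => a ≠ b ∧ ¬ E a b)) ∪ (X₀ \ B) := by
        intro a ha
        by_cases haB : a ∈ B
        · refine Finset.mem_union_left _ (Finset.mem_filter.2 ⟨ha, ?_, (hBprop a haB).1⟩)
          intro h
          exact hBnot (h ▸ haB)
        · exact Finset.mem_union_right _ (Finset.mem_sdiff.2 ⟨hWbsub ha, haB⟩)
      have h1 : (X₀ \ B).card ≤ 49*k := by
        rw [Finset.card_sdiff_of_subset hBsub]
        omega
      calc Wb.card ≤ ((Wb.filter (fun a => a ≠ b ∧ ¬ E a b)) ∪ (X₀ \ B)).card :=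
            Finset.card_le_card hsub
      _ ≤ (Wb.filter (fun a => a ≠ b ∧ ¬ E a b)).card + (X₀ \ B).card :=
            Finset.card_union_le _ _
      _ ≤ _ := Nat.add_le_add_left h1 _
    have hup : ∀ a ∈ Wb, (Wb.filter (fun b' => a ≠ b' ∧ ¬ E a b')).card ≤ 49*k := by
      intro a ha
      obtain ⟨B, hBsub, hBcard, hBnot, hBprop⟩ := trap a ha
      have hsub : Wb.filter (fun b' => a ≠ b' ∧ ¬ E a b') ⊆ X₀ \ B := by
        intro y hy
        obtain ⟨hyW, hya, hnE⟩ := Finset.mem_filter.1 hy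
        refine Finset.mem_sdiff.2 ⟨hWbsub hyW, fun hyB => hnE (hBprop y hyB).2⟩
      calc (Wb.filter (fun b' => a ≠ b' ∧ ¬ E a b')).card ≤ (X₀ \ B).card :=
            Finset.card_le_card hsub
      _ ≤ 49*k := by rw [Finset.card_sdiff_of_subset hBsub]; omega
    have hcount : ∑ b ∈ Wb, (Wb.filter (fun a => a ≠ b ∧ ¬ E a b)).card
        = ∑ a ∈ Wb, (Wb.filter (fun b' => a ≠ b' ∧ ¬ E a b')).card := by
      simp only [Finset.card_filter]
      rw [Finset.sum_comm]
    have h1 : Wb.card * Wb.card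
        ≤ (∑ b ∈ Wb, (Wb.filter (fun a => a ≠ b ∧ ¬ E a b)).card) + Wb.card * (49*k) := by
      have := Finset.sum_le_sum hlow
      rw [Finset.sum_add_distrib, Finset.sum_const, smul_eq_mul] at this
      simpa [Finset.sum_const, smul_eq_mul] using this
    have h2 : ∑ a ∈ Wb, (Wb.filter (fun b' => a ≠ b' ∧ ¬ E a b')).card
        ≤ Wb.card * (49*k) := Finset.sum_le_card_nsmul _ _ _ hup
    rw [hcount] at h1
    rcases Nat.eq_zero_or_pos Wb.card with h0 | hpos
    · omega
    · have : Wb.card * Wb.card ≤ Wb.card * (98*k) := by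
        calc Wb.card * Wb.card ≤ Wb.card * (49*k) + Wb.card * (49*k) := by omega
        _ = Wb.card * (98*k) := by ring
      have := Nat.le_of_mul_le_mul_left (by linarith [this] : Wb.card * Wb.card ≤ Wb.card * (98*k)) hpos
      omega
  refine ⟨X₀ \ Wb, ?_, ?_⟩
  · have : (X₀ \ Wb).card = X₀.card - Wb.card := Finset.card_sdiff_of_subset hWbsub
    omega
  · intro v hv w hw hvw F hFc hvF hwF
    obtain ⟨hvX, hvW⟩ := Finset.mem_sdiff.1 hv
    obtain ⟨hwX, hwW⟩ := Finset.mem_sdiff.1 hw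
    have hnotbad : ¬ (∃ v ∈ X₀, ∃ F : Finset V,
        v ≠ w ∧ v ∉ F ∧ w ∉ F ∧ F.card ≤ 3*k ∧ w ∉ reachF E F v 4) :=
      fun hb => hwW (Finset.mem_filter.2 ⟨hwX, hb⟩)
    push_neg at hnotbad
    have hreach : w ∈ reachF E F v 4 := hnotbad v hvX F hvw hvF hwF hFc
    obtain ⟨p, hnd, hch, hh, hl, hlen, hmem⟩ := reachF_path F v 4 w hreach
    refine ⟨p, pathFrom_of_parts ?_ hnd hch hh hl, hlen, ?_⟩
    · intro hc
      rw [hc] at hh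
      simp at hh
    · intro z hz
      exact reachF_not_mem_F hvF 4 z (hmem z (internals_mem hz))

private lemma caseB {E : V → V → Prop} (hT : SemiComplete E) {k : ℕ}
    {X Y : Set V} (hM : MatchingTangle E (20*k+1) (20*k) X Y) :
    ∃ S : Finset V, k ≤ S.card ∧ GoodS E k S := by
  classical
  obtain ⟨hdisj, hXc, hYc, ⟨f, hbij, harc⟩, hgap⟩ := hM
  set X₀ : Finset V := (Set.toFinite X).toFinset with hX₀
  have hX₀mem : ∀ {x}, x ∈ X₀ ↔ x ∈ X := fun {x} => Set.Finite.mem_toFinset _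
  have hX₀card : X₀.card = 20*k+1 := by
    rw [← Set.ncard_eq_toFinset_card X (Set.toFinite X)]
    exact hXc
  set X₂ := X₀.filter (fun x => 9*k ≤ (X₀.filter (fun z => E x z)).card) with hX₂
  have hX₂sub : X₂ ⊆ X₀ := Finset.filter_subset _ _
  have hX₂card : k ≤ X₂.card := by
    set Z := X₀ \ X₂ with hZ
    have hZsmall : Z.card ≤ 18*k - 1 := by
      rcases Z.eq_empty_or_nonempty with he | hne
      · simp [he]
      obtain ⟨q, hqZ, hq⟩ := exists_dominant hT Z hne
      obtain ⟨hqX, hqn⟩ := Finset.mem_sdiff.1 hqZ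
      have hqnot : ¬ (9*k ≤ (X₀.filter (fun z => E q z)).card) := by
        intro hc
        exact hqn (Finset.mem_filter.2 ⟨hqX, hc⟩)
      push_neg at hqnot
      have hsub : Z.filter (fun z => E q z) ⊆ X₀.filter (fun z => E q z) :=
        Finset.filter_subset_filter _ (Finset.sdiff_subset)
      have := Finset.card_le_card hsub
      omega
    have hsplit : (X₀ \ X₂).card + X₂.card = X₀.card :=
      Finset.card_sdiff_add_card_eq_card hX₂sub
    rw [hZ] at hZsmall
    omega
  refine ⟨X₂, by omega, ?_⟩
  intro x hx x' hx' hxx' F hFc hxF hx'F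
  have hxX : x ∈ X := hX₀mem.1 (hX₂sub hx)
  have hx'X : x' ∈ X := hX₀mem.1 (hX₂sub hx')
  have hk1 : 1 ≤ k := by
    by_contra hk0
    push_neg at hk0
    interval_cases k
    have hcc : ({x, x'} : Finset V).card ≤ X₀.card := by
      apply Finset.card_le_card
      intro z hz
      rcases Finset.mem_insert.1 hz with rfl | hz'
      · exact hX₂sub hx
      · rw [Finset.mem_singleton] at hz'
        exact hz' ▸ hX₂sub hx'
    rw [Finset.card_insert_of_notMem (by simp [hxx']), Finset.card_singleton] at hcc
    omega
  by_cases hdir : E x x'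
  · refine ⟨[x, x'], pathFrom_of_parts (by simp) (by simp [hxx']) (by simp [List.Chain', hdir])
      rfl rfl, by simp, ?_⟩
    intro z hz
    simp [internals] at hz
  · -- pick x₂ ∈ N⁺(x) ∩ X₀ avoiding F, x', and f-preimage of F
    have hx9 : 9*k ≤ (X₀.filter (fun z => E x z)).card := (Finset.mem_filter.1 hx).2
    have hpre : (X₀.filter (fun a => f a ∈ F)).card ≤ F.card := by
      apply Finset.card_le_card_of_injOn f
      · intro a ha
        exact (Finset.mem_filter.1 ha).2
      · intro a ha b hb hab
        exact hbij.injOn (hX₀mem.1 (Finset.mem_filter.1 ha).1)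
          (hX₀mem.1 (Finset.mem_filter.1 hb).1) hab
    have hcand : ((X₀.filter (fun z => E x z)) \ (F ∪ {x'} ∪ X₀.filter (fun a => f a ∈ F))).Nonempty := by
      rw [← Finset.card_pos]
      have h1 : (F ∪ {x'} ∪ X₀.filter (fun a => f a ∈ F)).card ≤ 3*k + 1 + 3*k := by
        calc (F ∪ {x'} ∪ X₀.filter (fun a => f a ∈ F)).card
            ≤ (F ∪ {x'}).card + (X₀.filter (fun a => f a ∈ F)).card := Finset.card_union_le _ _
        _ ≤ (F.card + 1) + (X₀.filter (fun a => f a ∈ F)).card := by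
            exact Nat.add_le_add_right (le_trans (Finset.card_union_le _ _) (by simp)) _
        _ ≤ 3*k + 1 + 3*k := by omega
      have h2 : (X₀.filter (fun z => E x z)).card
          ≤ ((X₀.filter (fun z => E x z)) \ (F ∪ {x'} ∪ X₀.filter (fun a => f a ∈ F))).card
            + (3*k + 1 + 3*k) := by
        calc (X₀.filter (fun z => E x z)).card
            ≤ ((X₀.filter (fun z => E x z)) \ (F ∪ {x'} ∪ X₀.filter (fun a => f a ∈ F))).card
              + (F ∪ {x'} ∪ X₀.filter (fun a => f a ∈ F)).card :=
              Finset.card_le_card_sdiff_add_card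
        _ ≤ _ := Nat.add_le_add_left h1 _
      omega
    obtain ⟨x₂, hx₂⟩ := hcand
    obtain ⟨hx₂f, hx₂n⟩ := Finset.mem_sdiff.1 hx₂
    obtain ⟨hx₂X₀, hExx₂⟩ := Finset.mem_filter.1 hx₂f
    rw [Finset.mem_union, Finset.mem_union] at hx₂n
    push_neg at hx₂n
    obtain ⟨⟨hx₂F, hx₂x'⟩, hx₂pre⟩ := hx₂n
    rw [Finset.mem_singleton] at hx₂x'
    have hfx₂F : f x₂ ∉ F := by
      intro hc
      exact hx₂pre (Finset.mem_filter.2 ⟨hx₂X₀, hc⟩)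
    have hx₂X : x₂ ∈ X := hX₀mem.1 hx₂X₀
    have hfx₂Y : f x₂ ∈ Y := hbij.mapsTo hx₂X
    have hEx₂f : E x₂ (f x₂) := harc x₂ hx₂X
    have hx₂x : x₂ ≠ x := by
      intro h
      exact hT.1 x (h ▸ hExx₂)
    have hfx₂X : ∀ a ∈ X, f x₂ ≠ a := by
      intro a ha h
      exact Set.disjoint_left.1 hdisj (h ▸ ha) hfx₂Y
    have hx₂fx₂ : x₂ ≠ f x₂ := by
      intro h
      have hEE := hEx₂f
      rw [← h] at hEE
      exact hT.1 x₂ hEE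
    have hxfx₂ : x ≠ f x₂ := (hfx₂X x hxX).symm
    have hx'fx₂ : x' ≠ f x₂ := (hfx₂X x' hx'X).symm
    have hx₂fx₂' : x₂ ≠ f x₂ := hx₂fx₂
    by_cases hdir2 : E (f x₂) x'
    · refine ⟨[x, x₂, f x₂, x'], pathFrom_of_parts (by simp) ?_ (by simp [List.Chain', hExx₂, hEx₂f, hdir2]) rfl rfl, by simp, ?_⟩
      · simp only [List.nodup_cons, List.mem_cons, List.mem_singleton, List.not_mem_nil,
          not_false_eq_true, List.nodup_nil, and_true, not_or]
        tauto
      · intro z hz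
        have : z = x₂ ∨ z = f x₂ := by simpa [internals] using hz
        rcases this with rfl | rfl
        · exact hx₂F
        · exact hfx₂F
    · -- length-4 path through a middle vertex
      have hfx₂x' : f x₂ ≠ x' := hfx₂X x' hx'X
      have hmid : degF E (f x₂) + 1
          ≤ (Finset.univ.filter (fun z => E (f x₂) z ∧ E z x')).card + degF E x' :=
        middles_card hT hfx₂x' hdir2
      have hgap' : degF E x' + 20*k < degF E (f x₂) := by
        have := hgap x' hx'X (f x₂) hfx₂Y
        rwa [outdeg_eq_degF, outdeg_eq_degF] at this
      have hmidbig : 20*k + 2 ≤ (Finset.univ.filter (fun z => E (f x₂) z ∧ E z x')).card := by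
        omega
      have hzcand : ((Finset.univ.filter (fun z => E (f x₂) z ∧ E z x'))
          \ (F ∪ {x, x₂})).Nonempty := by
        rw [← Finset.card_pos]
        have h1 : (F ∪ {x, x₂}).card ≤ 3*k + 2 := by
          calc (F ∪ {x, x₂}).card ≤ F.card + ({x, x₂} : Finset V).card :=
              Finset.card_union_le _ _
          _ ≤ 3*k + 2 := by
              have : ({x, x₂} : Finset V).card ≤ 2 :=
                (Finset.card_insert_le _ _).trans (by simp)
              omega
        have h2 := Finset.card_le_card_sdiff_add_card
          (s := Finset.univ.filter (fun z => E (f x₂) z ∧ E z x')) (t := F ∪ {x, x₂})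
        omega
      obtain ⟨z, hz⟩ := hzcand
      obtain ⟨hzf, hzn⟩ := Finset.mem_sdiff.1 hz
      obtain ⟨-, hEfz, hEzx'⟩ := Finset.mem_filter.1 hzf
      rw [Finset.mem_union] at hzn
      push_neg at hzn
      obtain ⟨hzF, hzxx₂⟩ := hzn
      rw [Finset.mem_insert] at hzxx₂
      push_neg at hzxx₂
      obtain ⟨hzx, hzx₂⟩ := hzxx₂
      rw [Finset.mem_singleton] at hzx₂
      have hzfx₂ : z ≠ f x₂ := fun h => hT.1 (f x₂) (h ▸ hEfz)
      have hzx' : z ≠ x' := fun h => hT.1 x' (h ▸ hEzx')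
      refine ⟨[x, x₂, f x₂, z, x'], pathFrom_of_parts (by simp) ?_
        (by simp [List.Chain', hExx₂, hEx₂f, hEfz, hEzx']) rfl rfl, by simp, ?_⟩
      · simp only [List.nodup_cons, List.mem_cons, List.mem_singleton, List.not_mem_nil,
          not_false_eq_true, List.nodup_nil, and_true, not_or]
        tauto
      · intro w hw
        have : w = x₂ ∨ w = f x₂ ∨ w = z := by simpa [internals] using hw
        rcases this with rfl | rfl | rfl
        · exact hx₂F
        · exact hfx₂F
        · exact hzF

private lemma embed {W : Type*} [Fintype W] {E : V → V → Prop} (k : ℕ)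
    (S : Finset V) (hGood : GoodS E k S) (hcardS : Fintype.card W ≤ S.card)
    (Eh : W → W → Prop) (hH : ∀ w : W, ¬ Eh w w)
    (hsize : Fintype.card W + {p : W × W | Eh p.1 p.2}.ncard ≤ k) :
    TopContain Eh E := by
  classical
  set A : Finset (W × W) := Finset.univ.filter (fun p => Eh p.1 p.2) with hA
  have hAm : {p : W × W | Eh p.1 p.2}.ncard = A.card := by
    rw [← Set.ncard_coe_finset]
    congr 1
    ext p
    simp [hA]
  rw [hAm] at hsize
  have hemb : Nonempty (W ↪ {x // x ∈ S}) := by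
    rw [Function.Embedding.nonempty_iff_card_le, Fintype.card_coe]
    exact hcardS
  obtain ⟨e⟩ := hemb
  set η : W → V := fun u => (e u : V) with hη
  have hηinj : Function.Injective η := fun a b h => e.injective (Subtype.ext h)
  have hηS : ∀ u, η u ∈ S := fun u => (e u).2
  have build : ∀ l : List (W × W), l.Nodup → (∀ a ∈ l, Eh a.1 a.2) →
      Fintype.card W + 3 * l.length ≤ 3 * k →
      ∃ P : W × W → List V, ∀ a ∈ l,
        PathFrom E (η a.1) (η a.2) (P a) ∧ (P a).length ≤ 5 ∧
        (∀ z ∈ internals (P a), ∀ u : W, η u ≠ z) ∧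
        (∀ b ∈ l, a ≠ b → ∀ z ∈ internals (P a), z ∉ internals (P b)) := by
    intro l
    induction l with
    | nil => exact fun _ _ _ => ⟨fun _ => [], by simp⟩
    | cons a l' ih =>
      intro hnd harcs hbound
      obtain ⟨P', hP'⟩ := ih (List.nodup_cons.1 hnd).2
        (fun b hb => harcs b (List.mem_cons_of_mem a hb))
        (by simp only [List.length_cons] at hbound; omega)
      have haa : Eh a.1 a.2 := harcs a (List.mem_cons_self)
      have hune : a.1 ≠ a.2 := by
        intro hcontra
        exact hH a.2 (hcontra ▸ haa)
      have hvw : η a.1 ≠ η a.2 := fun hcontra => hune (hηinj hcontra)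
      set F₀ : Finset V := Finset.univ.filter
        (fun z => (∃ u : W, η u = z) ∨ ∃ b ∈ l', z ∈ internals (P' b)) with hF₀
      set F : Finset V := (F₀.erase (η a.1)).erase (η a.2) with hF
      have hF₀card : F₀.card ≤ Fintype.card W + 3 * l'.length := by
        have hsub : F₀ ⊆ (Finset.univ.image η) ∪
            (l'.toFinset.biUnion (fun b => (internals (P' b)).toFinset)) := by
          intro z hz
          rcases (Finset.mem_filter.1 hz).2 with ⟨u, hu⟩ | ⟨b, hb, hzb⟩
          · exact Finset.mem_union_left _ (Finset.mem_image.2 ⟨u, Finset.mem_univ _, hu⟩)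
          · exact Finset.mem_union_right _ (Finset.mem_biUnion.2
              ⟨b, List.mem_toFinset.2 hb, List.mem_toFinset.2 hzb⟩)
        have h1 : (Finset.univ.image η).card ≤ Fintype.card W := by
          calc (Finset.univ.image η).card ≤ (Finset.univ : Finset W).card :=
                Finset.card_image_le
          _ = Fintype.card W := Finset.card_univ
        have h2 : (l'.toFinset.biUnion (fun b => (internals (P' b)).toFinset)).card
            ≤ 3 * l'.length := by
          calc (l'.toFinset.biUnion (fun b => (internals (P' b)).toFinset)).card
              ≤ ∑ b ∈ l'.toFinset, (internals (P' b)).toFinset.card :=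
                Finset.card_biUnion_le
          _ ≤ ∑ _b ∈ l'.toFinset, 3 := by
              apply Finset.sum_le_sum
              intro b hb
              have hb' := List.mem_toFinset.1 hb
              have hlen := (hP' b hb').2.1
              have hil := internals_length (P' b)
              calc (internals (P' b)).toFinset.card ≤ (internals (P' b)).length :=
                    List.toFinset_card_le _
              _ ≤ 3 := by omega
          _ = 3 * l'.toFinset.card := by rw [Finset.sum_const, smul_eq_mul, mul_comm]
          _ ≤ 3 * l'.length := by
              have := List.toFinset_card_le l'
              omega
        calc F₀.card ≤ _ := Finset.card_le_card hsub
        _ ≤ (Finset.univ.image η).card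
            + (l'.toFinset.biUnion (fun b => (internals (P' b)).toFinset)).card :=
              Finset.card_union_le _ _
        _ ≤ Fintype.card W + 3 * l'.length := by omega
      have hFsubF₀ : F ⊆ F₀ :=
        (Finset.erase_subset _ _).trans (Finset.erase_subset _ _)
      have hFcard : F.card ≤ 3 * k := by
        have h1 : F.card ≤ F₀.card := Finset.card_le_card hFsubF₀
        simp only [List.length_cons] at hbound
        omega
      have hvF : η a.1 ∉ F := fun hc =>
        Finset.notMem_erase _ _ ((Finset.mem_erase.1 hc).2)
      have hwF : η a.2 ∉ F := Finset.notMem_erase _ _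
      obtain ⟨p, hp, hplen, hpF⟩ :=
        hGood (η a.1) (hηS a.1) (η a.2) (hηS a.2) hvw F hFcard hvF hwF
      have hpnd : p.Nodup := hp.1.2.1
      have hnotF₀ : ∀ z ∈ internals p, z ∉ F₀ := by
        intro z hz hzF₀
        have h1 : z ≠ η a.1 := internals_ne_head hpnd hp.2.1 hz
        have h2 : z ≠ η a.2 := internals_ne_last hpnd hp.2.2 hz
        exact hpF z hz (Finset.mem_erase.2 ⟨h2, Finset.mem_erase.2 ⟨h1, hzF₀⟩⟩)
      refine ⟨fun b => if b = a then p else P' b, ?_⟩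
      intro b hb
      simp only []
      rcases List.mem_cons.1 hb with hba | hb'
      · subst hba
        rw [if_pos rfl]
        refine ⟨hp, hplen, ?_, ?_⟩
        · intro z hz u hu
          exact hnotF₀ z hz (Finset.mem_filter.2 ⟨Finset.mem_univ _, Or.inl ⟨u, hu⟩⟩)
        · intro c hc hbc z hz
          rcases List.mem_cons.1 hc with hca' | hc'
          · exact absurd hca'.symm hbc
          · have hca : ¬ (c = b) := fun hcontra => (List.nodup_cons.1 hnd).1 (hcontra ▸ hc')
            rw [if_neg hca]
            intro hzc
            exact hnotF₀ z hz
              (Finset.mem_filter.2 ⟨Finset.mem_univ _, Or.inr ⟨c, hc', hzc⟩⟩)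
      · have hba : b ≠ a := fun hcontra => (List.nodup_cons.1 hnd).1 (hcontra ▸ hb')
        rw [if_neg hba]
        obtain ⟨g1, g2, g3, g4⟩ := hP' b hb'
        refine ⟨g1, g2, g3, ?_⟩
        intro c hc hbc z hz
        rcases List.mem_cons.1 hc with rfl | hc'
        · rw [if_pos rfl]
          intro hzp
          exact hnotF₀ z hzp
            (Finset.mem_filter.2 ⟨Finset.mem_univ _, Or.inr ⟨b, hb', hz⟩⟩)
        · have hca : ¬ (c = a) := fun hcontra => (List.nodup_cons.1 hnd).1 (hcontra ▸ hc')
          rw [if_neg hca]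
          exact g4 c hc' hbc z hz
  obtain ⟨P, hP⟩ := build A.toList (Finset.nodup_toList A)
    (fun a ha => (Finset.mem_filter.1 (Finset.mem_toList.1 ha)).2)
    (by rw [Finset.length_toList]; omega)
  have hmem : ∀ {u v : W}, Eh u v → (u, v) ∈ A.toList := by
    intro u v huv
    exact Finset.mem_toList.2 (Finset.mem_filter.2 ⟨Finset.mem_univ _, huv⟩)
  refine ⟨η, fun u u' => P (u, u'), hηinj, ?_, ?_, ?_⟩
  · intro u v' huv
    exact (hP (u, v') (hmem huv)).1
  · intro u v' huv z hz hrange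
    obtain ⟨u'', hu''⟩ := hrange
    exact (hP (u, v') (hmem huv)).2.2.1 z hz u'' hu''
  · intro u v' u'' v''' h1 h2 hne z hz
    exact (hP (u, v') (hmem h1)).2.2.2 (u'', v''') (hmem h2) hne z hz

end Stmt18Aux

/-- A semi-complete digraph containing a `(520k+2, 20k)`-degree tangle or a
`(20k+1, 20k)`-matching tangle topologically contains every simple digraph `H` with
`|V(H)| + |E(H)| ≤ k`. -/
theorem stmt_18 {V W : Type*} [Fintype V] [Fintype W] (E : V → V → Prop)
    (hT : SemiComplete E) (k : ℕ)
    (h : (∃ X : Set V, DegreeTangle E (520 * k + 2) (20 * k) X) ∨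
         (∃ X Y : Set V, MatchingTangle E (20 * k + 1) (20 * k) X Y))
    (Eh : W → W → Prop) (hH : ∀ w : W, ¬ Eh w w)
    (hsize : Fintype.card W + {p : W × W | Eh p.1 p.2}.ncard ≤ k) :
    TopContain Eh E := by
  classical
  obtain ⟨S, hScard, hSgood⟩ : ∃ S : Finset V, k ≤ S.card ∧ GoodS E k S := by
    rcases h with ⟨X, hX⟩ | ⟨X, Y, hXY⟩
    · exact caseA hT hX
    · exact caseB hT hXY
  have hWk : Fintype.card W ≤ k := by omega
  exact embed k S hSgood (le_trans hWk hScard) Eh hH hsize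
end

section
/- Let T be a semi-complete digraph, k a nonnegative integer, and let (X, Y) be a partition of V(T) such that the number of arcs from X to Y is at most k. Then for every x ∈ X and y ∈ Y we have d⁺(x) ≤ d⁺(y) + k + 1. -/
/-- If `(X, Y)` is a partition of the vertex set of a semi-complete digraph
with at most `k` arcs from `X` to `Y`, then `d⁺(x) ≤ d⁺(y) + k + 1` for all `x ∈ X`,
`y ∈ Y`. -/
theorem stmt_19 {V : Type*} [Fintype V] (E : V → V → Prop) (hT : SemiComplete E)
    (k : ℕ) (X Y : Set V) (hcover : X ∪ Y = Set.univ) (hdisj : Disjoint X Y)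
    (harcs : {p : V × V | p.1 ∈ X ∧ p.2 ∈ Y ∧ E p.1 p.2}.ncard ≤ k) :
    ∀ x ∈ X, ∀ y ∈ Y, outdeg E x ≤ outdeg E y + k + 1 := by
  classical
  intro x hx y hy
  set A := {p : V × V | p.1 ∈ X ∧ p.2 ∈ Y ∧ E p.1 p.2} with hA
  set S := {w : V | (w ∈ Y ∧ E x w) ∨ (w ∈ X ∧ E w y)} with hSdef
  have hsub : {w | E x w} ⊆ {w | E y w} ∪ S := by
    intro w hw
    by_cases hwY : w ∈ Y
    · exact Or.inr (Or.inl ⟨hwY, hw⟩)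
    · have hwX : w ∈ X := by
        have hmem : w ∈ X ∪ Y := hcover.symm ▸ Set.mem_univ w
        exact hmem.resolve_right hwY
      have hwy : w ≠ y := fun h => hwY (h ▸ hy)
      rcases hT.2 w y hwy with h | h
      · exact Or.inr (Or.inr ⟨hwX, h⟩)
      · exact Or.inl h
  have hS1 : (S \ {y}).ncard ≤ A.ncard := by
    apply Set.ncard_le_ncard_of_injOn (fun w => if w ∈ Y then (x, w) else (w, y))
    · intro w hw
      rcases hw.1 with ⟨hwY, hxw⟩ | ⟨hwX, hwy⟩
      · simp only [hwY, if_pos]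
        exact ⟨hx, hwY, hxw⟩
      · have hwY : w ∉ Y := Set.disjoint_left.mp hdisj hwX
        simp only [hwY, if_neg, if_false]
        exact ⟨hwX, hy, hwy⟩
    · intro w hw w' hw' heq
      by_cases h1 : w ∈ Y <;> by_cases h2 : w' ∈ Y <;>
        simp only [h1, h2, if_pos, if_neg, if_false, Prod.mk.injEq] at heq
      · exact heq.2
      · exact absurd heq.2 (by simpa using hw.2)
      · exact absurd heq.2.symm (by simpa using hw'.2)
      · exact heq.1
  have hS2 : S.ncard ≤ A.ncard + 1 := by
    calc S.ncard ≤ ((S \ {y}) ∪ {y}).ncard := by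
          apply Set.ncard_le_ncard _ (Set.toFinite _)
          intro w hw
          by_cases h : w = y
          · exact Or.inr h
          · exact Or.inl ⟨hw, h⟩
      _ ≤ (S \ {y}).ncard + ({y} : Set V).ncard := Set.ncard_union_le _ _
      _ ≤ A.ncard + 1 := by simp [hS1]
  calc outdeg E x ≤ ({w | E y w} ∪ S).ncard :=
        Set.ncard_le_ncard hsub (Set.toFinite _)
    _ ≤ {w | E y w}.ncard + S.ncard := Set.ncard_union_le _ _
    _ ≤ outdeg E y + (A.ncard + 1) := Nat.add_le_add_left hS2 _
    _ ≤ outdeg E y + k + 1 := by omega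
end
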